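/- arXiv:math/0403157 — 5 statements merged into one kernel-verified Lean document; each statement's English description precedes it below -/
import Mathlib

section
/- Assume K is algebraically closed. Let r ∈ K satisfy r⁵ + 25r − 25 = 0, and let x ∈ K satisfy 5^(−1/2) < ‖x − r‖ < 5^(−2/5). Consider the monic degree-4 polynomial f⁺(x, Y) ∈ K[Y]. In its multiset of 4 roots in K, exactly 2 roots y satisfy ‖y‖² = 5·‖x − r‖⁵ (so in particular 5^(−3/4) < ‖y‖ < 5^(−1/2)), and exactly 2 roots y satisfy ‖y‖ = 5^(−1/2). -/
open Polynomial

section AuxNA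
variable {K : Type*} [Field K] (v : AbsoluteValue K ℝ)

private lemma dom_add (hna : IsNonarchimedean v) {a b : K} (h : v b < v a) :
    v (a + b) = v a := by
  refine le_antisymm ((hna a b).trans (max_le le_rfl h.le)) ?_
  have h2 : v a ≤ max (v (a + b)) (v (-b)) := by
    have := hna (a + b) (-b); simpa using this
  rw [v.map_neg] at h2
  rcases le_max_iff.mp h2 with h3 | h3
  · exact h3
  · linarith

private lemma add_le_bound (hna : IsNonarchimedean v) {a b : K} {A B : ℝ}
    (ha : v a ≤ A) (hb : v b ≤ B) : v (a + b) ≤ max A B :=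
  (hna a b).trans (max_le_max ha hb)

end AuxNA

private lemma msprod_const {s : Multiset ℝ} {b : ℝ} (h : ∀ a ∈ s, a = b) :
    s.prod = b ^ Multiset.card s := by
  induction s using Multiset.induction_on with
  | empty => simp
  | cons a t ih =>
    simp only [Multiset.prod_cons, Multiset.card_cons]
    rw [h a (Multiset.mem_cons_self a t), ih (fun x hx => h x (Multiset.mem_cons_of_mem hx)),
      pow_succ]
    ring

private instance fact_prime_five : Fact (Nat.Prime 5) := ⟨by norm_num⟩

/- purely real-arithmetic auxiliary facts, kept out of the big proof so that
`nlinarith` works in a small context -/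

private lemma case_small {t a : ℝ} (htpos : 0 < t) (ht5 : t^5 < 1/25)
    (ht5' : 1/125 < t^5) (ha0 : 0 ≤ a) (hsm : a^2 < 5*t^5) :
    a^4 < t^5 ∧ 1/5*a^3 < t^5 ∧ 1/5*a^2 < t^5 ∧ 1/25*a < t^5 := by
  have hT : 0 < t^5 := pow_pos htpos 5
  have hy1 : a < 1 := by nlinarith
  refine ⟨?_, ?_, ?_, ?_⟩
  · nlinarith [sq_nonneg a]
  · nlinarith [sq_nonneg a]
  · linarith
  · have hay : a < 25*t^5 := by nlinarith
    linarith

private lemma case_mid {t a : ℝ} (ht5' : 1/125 < t^5)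
    (hsm : 5*t^5 < a^2) (hlt : a^2 < 1/5) (ha0 : 0 ≤ a) :
    a^4 < 1/5*a^2 ∧ 1/5*a^3 < 1/5*a^2 ∧ 1/25*a < 1/5*a^2 ∧ t^5 < 1/5*a^2 ∧ 1/5 < a := by
  have h25 : 1/25 < a^2 := by nlinarith
  have hagt : 1/5 < a := by nlinarith
  have ha1 : a < 1 := by nlinarith
  refine ⟨by nlinarith, by nlinarith, by nlinarith, by linarith, hagt⟩

private lemma case_big {t a : ℝ} (ht5 : t^5 < 1/25) (hgt : 1/5 < a^2) (ha0 : 0 ≤ a) :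
    1/5*a^3 < a^4 ∧ 1/5*a^2 < a^4 ∧ 1/25*a < a^4 ∧ t^5 < a^4 := by
  have hagt : 1/5 < a := by nlinarith
  have hapos : 0 < a := by linarith
  have h4 : 1/25 < a^4 := by nlinarith
  refine ⟨?_, ?_, ?_, by linarith⟩
  · nlinarith [mul_pos (mul_pos hapos hapos) hapos]
  · nlinarith [mul_pos hapos hapos]
  · nlinarith [mul_pos hapos hapos, mul_pos (mul_pos hapos hapos) hapos]

private lemma c0_bounds {p t : ℝ} (hppos : 0 < p) (hplt1 : p < 1) (hpgt : 1/5 < p)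
    (hpeq : p^5 = 1/25) (htpos : 0 < t) (ht2 : 1/5 < t^2) (h10 : 1/3125 < t^10) :
    p^4 < 1/5 ∧ 1/25*t < t^5 ∧ 1/5*p^3*t^2 < t^5 ∧ 1/5*p^2*t^3 < t^5 ∧
      1/5*p*t^4 < t^5 ∧ 1/25*p^2 < t^5 := by
  have ht4 : 1/25 < t^4 := by nlinarith
  have hp4 : p^4 < 1/5 := by nlinarith [pow_nonneg hppos.le 4]
  have h5t : 1 < 5*t := by nlinarith
  refine ⟨hp4, by nlinarith, ?_, ?_, ?_, ?_⟩
  · have e1 : p^6 = (1/25) * p := by linear_combination p * hpeq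
    have e2 : (1/125 : ℝ) < t^6 := by nlinarith [pow_pos htpos 2, sq_nonneg (t^2 - 1/5)]
    have hsq : p^6 < 25 * t^6 := by rw [e1]; nlinarith
    have hA : p^3 < 5 * t^3 := by
      nlinarith [hsq, pow_pos hppos 3, pow_pos htpos 3]
    nlinarith [hA, pow_pos htpos 2]
  · nlinarith [pow_pos htpos 3]
  · have hgt5 : p < 5*t := by linarith
    nlinarith [hgt5, pow_pos htpos 4]
  · have hsq : p^4 < 625 * t^10 := by nlinarith
    nlinarith [hsq, pow_pos hppos 2, pow_pos htpos 5]

private lemma cnt_case4 {U : ℝ} (hU0 : 0 < U) (hUlt : U < 1/25)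
    (h : U^2 = (5*U)^4 * (1/5:ℝ)^0) : False := by
  norm_num at h
  have hU2 : U^2 < 1/625 := by nlinarith
  nlinarith [h, hU2, mul_pos hU0 hU0]

private lemma cnt_case3 {U : ℝ} (hU0 : 0 < U) (hUlt : U < 1/25)
    (h : U^2 = (5*U)^3 * (1/5:ℝ)^1) : False := by
  norm_num at h
  nlinarith [h, mul_pos hU0 hU0]

private lemma cnt_case1 {U : ℝ} (hU0 : 0 < U) (hUlt : U < 1/25)
    (h : U^2 = (5*U)^1 * (1/5:ℝ)^3) : False := by
  norm_num at h
  nlinarith [h]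

private lemma cnt_case0 {U : ℝ} (hU0 : 0 < U) (hUlt : U < 1/25) (hUgt : 1/125 < U)
    (h : U^2 = (5*U)^0 * (1/5:ℝ)^4) : False := by
  norm_num at h
  nlinarith [h]

open Polynomial in
open scoped Classical in
set_option maxHeartbeats 1600000 in
/-- Over algebraically closed `K`, for `r` a root of `X⁵ + 25X − 25` and `x` with
`5^(−1/2) < ‖x − r‖ < 5^(−2/5)`, the monic degree-4 polynomial `f⁺(x, Y)` has 4
roots (with multiplicity), of which exactly 2 satisfy `‖y‖² = 5‖x − r‖⁵`
(hence `5^(−3/4) < ‖y‖ < 5^(−1/2)`) and exactly 2 satisfy `‖y‖ = 5^(−1/2)`. -/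
theorem roots_of_fplus_in_y_on_annulus {K : Type*} [Field K] [IsAlgClosed K]
    (v : AbsoluteValue K ℝ) (hna : IsNonarchimedean v)
    (hQ : ∀ q : ℚ, v (q : K) = (padicNorm 5 q : ℝ))
    (r x : K) (hr : r ^ 5 + 25 * r - 25 = 0)
    (h₁ : (5 : ℝ) ^ (-(1 / 2) : ℝ) < v (x - r))
    (h₂ : v (x - r) < (5 : ℝ) ^ (-(2 / 5) : ℝ)) :
    ∀ P : K[X],
      P = X ^ 4 + C (5 * x + 5) * X ^ 3 + C (15 * x ^ 2 + 5 * x + 15) * X ^ 2 +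
          C (25 * x ^ 3 + 25) * X +
          C (-x ^ 5 + 25 * x ^ 4 - 25 * x ^ 3 + 25 * x ^ 2 - 25 * x + 25) →
      Multiset.card P.roots = 4 ∧
      Multiset.card (P.roots.filter fun y => v y ^ 2 = 5 * v (x - r) ^ 5) = 2 ∧
      Multiset.card (P.roots.filter fun y => v y = (5 : ℝ) ^ (-(1 / 2) : ℝ)) = 2 ∧
      ∀ y ∈ P.roots, v y ^ 2 = 5 * v (x - r) ^ 5 →
        (5 : ℝ) ^ (-(3 / 4) : ℝ) < v y ∧ v y < (5 : ℝ) ^ (-(1 / 2) : ℝ) := by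
  intro P hP
  subst hP
  set s : ℝ := (5 : ℝ) ^ (-(1 / 2) : ℝ) with hs_def
  set u : ℝ := (5 : ℝ) ^ (-(2 / 5) : ℝ) with hu_def
  set w : ℝ := (5 : ℝ) ^ (-(3 / 4) : ℝ) with hw_def
  set t : ℝ := v (x - r) with ht_def
  -- numeric facts about the rpow constants
  have h5pos : (0:ℝ) < 5 := by norm_num
  have hs_pos : 0 < s := Real.rpow_pos_of_pos h5pos _
  have hu_pos : 0 < u := Real.rpow_pos_of_pos h5pos _
  have hw_pos : 0 < w := Real.rpow_pos_of_pos h5pos _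
  have hs2 : s ^ 2 = 1/5 := by
    rw [hs_def, ← Real.rpow_natCast ((5:ℝ) ^ (-(1/2):ℝ)) 2,
      ← Real.rpow_mul (by norm_num : (0:ℝ) ≤ 5)]
    norm_num
  have hu5 : u ^ 5 = 1/25 := by
    rw [hu_def, ← Real.rpow_natCast ((5:ℝ) ^ (-(2/5):ℝ)) 5,
      ← Real.rpow_mul (by norm_num : (0:ℝ) ≤ 5)]
    norm_num
  have hw4 : w ^ 4 = 1/125 := by
    rw [hw_def, ← Real.rpow_natCast ((5:ℝ) ^ (-(3/4):ℝ)) 4,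
      ← Real.rpow_mul (by norm_num : (0:ℝ) ≤ 5)]
    norm_num
  -- basic facts about t
  have ht0 : 0 ≤ t := v.nonneg _
  have htpos : 0 < t := hs_pos.trans h₁
  have ht2 : 1/5 < t ^ 2 := by
    have := pow_lt_pow_left₀ h₁ hs_pos.le (by norm_num : (2:ℕ) ≠ 0)
    rwa [hs2] at this
  have ht5 : t ^ 5 < 1/25 := by
    have := pow_lt_pow_left₀ h₂ ht0 (by norm_num : (5:ℕ) ≠ 0)
    rwa [hu5] at this
  have h10 : 1/3125 < t ^ 10 := by
    have := pow_lt_pow_left₀ ht2 (by norm_num : (0:ℝ) ≤ 1/5) (by norm_num : (5:ℕ) ≠ 0)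
    nlinarith [this]
  have ht5' : 1/125 < t ^ 5 := by
    nlinarith [pow_pos htpos 5, h10]
  have h5t5 : 5 * t ^ 5 < 1/5 := by linarith
  have h5t5' : 1/25 < 5 * t ^ 5 := by linarith
  -- values of v on small rationals
  have hv5 : v 5 = 1/5 := by
    have h := hQ 5
    rw [show ((5:ℚ):K) = (5:K) by norm_num] at h
    rw [h, show ((5:ℚ)) = ((5:ℕ):ℚ) by norm_num, padicNorm.padicNorm_p (p := 5) (by norm_num)]
    norm_num
  have hv3 : v 3 = 1 := by
    have h := hQ 3
    rw [show ((3:ℚ):K) = (3:K) by norm_num] at h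
    have h3 : padicNorm 5 ((3:ℤ):ℚ) = 1 := (padicNorm.int_eq_one_iff (p := 5) 3).mpr (by decide)
    rw [h, show ((3:ℚ)) = ((3:ℤ):ℚ) by norm_num, h3]
    norm_num
  have hv2 : v 2 ≤ 1 := by
    have h := hQ 2
    rw [show ((2:ℚ):K) = (2:K) by norm_num] at h
    have h2 : padicNorm 5 ((2:ℤ):ℚ) ≤ 1 := padicNorm.of_int (p := 5) 2
    rw [h, show ((2:ℚ)) = ((2:ℤ):ℚ) by norm_num]
    exact_mod_cast h2
  have hv1 : v 1 = 1 := v.map_one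
  have hv25 : v 25 = 1/25 := by
    rw [show (25:K) = 5 * 5 by norm_num, map_mul, hv5]; norm_num
  have hv10 : v 10 ≤ 1/5 := by
    rw [show (10:K) = 2 * 5 by norm_num, map_mul, hv5]
    linarith [v.nonneg (2:K), hv2]
  -- the valuation of r
  have hrho0 : 0 ≤ v r := v.nonneg r
  have hr5 : (r:K) ^ 5 = 25 * (1 - r) := by linear_combination hr
  have hρ5v : (v r) ^ 5 = (1/25) * v (1 - r) := by
    rw [← map_pow, hr5, map_mul, hv25]
  have hρlt1 : v r < 1 := by
    by_contra hc
    push_neg at hc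
    have hb : v (1 - r) ≤ max (v 1) (v (-r)) := by
      have := hna 1 (-r); simpa [sub_eq_add_neg] using this
    rw [v.map_neg, hv1] at hb
    have hb2 : v (1 - r) ≤ v r := hb.trans (by rw [max_le_iff]; exact ⟨hc, le_rfl⟩)
    have h14 : (1:ℝ) ≤ (v r) ^ 4 := by
      calc (1:ℝ) = 1 ^ 4 := by norm_num
      _ ≤ (v r) ^ 4 := pow_le_pow_left₀ (by norm_num) hc 4
    nlinarith [hρ5v, hb2, v.nonneg (1 - r)]
  have h1r : v (1 - r) = 1 := by
    have := dom_add v hna (a := 1) (b := -r) (by rw [v.map_neg, hv1]; exact hρlt1)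
    rw [hv1] at this
    rwa [sub_eq_add_neg]
  have hρeq : (v r) ^ 5 = 1/25 := by rw [hρ5v, h1r]; norm_num
  have hρpos : 0 < v r := by
    rcases lt_or_eq_of_le hrho0 with h | h
    · exact h
    · exfalso; rw [← h] at hρeq; norm_num at hρeq
  have hρgt : 1/5 < v r := by
    by_contra hc
    push_neg at hc
    have := pow_le_pow_left₀ hrho0 hc 5
    rw [hρeq] at this
    norm_num at this
  have htρ : t < v r := by
    by_contra hc
    push_neg at hc
    have := pow_le_pow_left₀ hrho0 hc 5
    rw [hρeq] at this
    linarith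
  have hvx : v x = v r := by
    have hx : (x:K) = r + (x - r) := by ring
    rw [hx]; exact dom_add v hna htρ
  obtain ⟨hρ4, hS1, hS2', hS3', hS4', hS5'⟩ :=
    c0_bounds hρpos hρlt1 hρgt hρeq htpos ht2 h10
  -- coefficient bounds
  have hvc3 : v (5*x + 5) ≤ 1/5 := by
    rw [show (5*x + 5 : K) = 5 * (x + 1) by ring, map_mul, hv5]
    have hx1 : v (x + 1) ≤ 1 := by
      have := add_le_bound v hna (a := x) (b := 1) le_rfl le_rfl
      rw [hv1, hvx] at this
      exact this.trans (max_le hρlt1.le le_rfl)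
    linarith [v.nonneg (x + 1)]
  have hvc2 : v (15*x^2 + 5*x + 15) = 1/5 := by
    rw [show (15*x^2 + 5*x + 15 : K) = 5 * (3 + (3*x^2 + x)) by ring, map_mul, hv5]
    have hin : v (3*x^2 + x) < 1 := by
      have hb := add_le_bound v hna (a := 3*x^2) (b := x) le_rfl le_rfl
      have h3x : v (3*x^2) < 1 := by
        rw [map_mul, map_pow, hv3, hvx, one_mul]
        exact pow_lt_one₀ hrho0 hρlt1 (by norm_num)
      have hxx : v x < 1 := by rw [hvx]; exact hρlt1
      exact hb.trans_lt (max_lt h3x hxx)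
    rw [dom_add v hna (by rw [hv3]; exact hin), hv3]
    norm_num
  have hvc1 : v (25*x^3 + 25) ≤ 1/25 := by
    rw [show (25*x^3 + 25 : K) = 25 * (x^3 + 1) by ring, map_mul, hv25]
    have hx1 : v (x^3 + 1) ≤ 1 := by
      have := add_le_bound v hna (a := x^3) (b := 1) le_rfl le_rfl
      rw [hv1, map_pow, hvx] at this
      exact this.trans (max_le (pow_le_one₀ hrho0 hρlt1.le) le_rfl)
    linarith [v.nonneg (x^3 + 1)]
  -- exact valuation of the constant coefficient
  have hvc0 : v (-x^5 + 25*x^4 - 25*x^3 + 25*x^2 - 25*x + 25) = t^5 := by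
    have eid : (-x^5 + 25*x^4 - 25*x^3 + 25*x^2 - 25*x + 25 : K) =
        -((x - r)^5) +
          (-(5*r^4 + 25)*(x - r) + -(10*r^3)*(x - r)^2 + -(10*r^2)*(x - r)^3 +
            -(5*r)*(x - r)^4 + 25*x^2*(x^2 - x + 1) - (r^5 + 25*r - 25)) := by
      ring
    rw [hr, sub_zero] at eid
    rw [eid]
    have hB1 : v (-(5*r^4 + 25)*(x - r)) ≤ (1/25) * t := by
      rw [map_mul, v.map_neg]
      have : v (5*r^4 + 25) ≤ 1/25 := by
        have hb := add_le_bound v hna (a := 5*r^4) (b := 25) le_rfl le_rfl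
        rw [map_mul, map_pow, hv5, hv25] at hb
        refine hb.trans (max_le ?_ le_rfl)
        linarith [hρ4]
      exact mul_le_mul_of_nonneg_right this ht0
    have hB2 : v (-(10*r^3)*(x - r)^2) ≤ (1/5) * (v r)^3 * t^2 := by
      rw [map_mul, v.map_neg, map_mul, map_pow, map_pow]
      have : v 10 * (v r)^3 ≤ (1/5) * (v r)^3 :=
        mul_le_mul_of_nonneg_right hv10 (pow_nonneg hrho0 3)
      exact mul_le_mul_of_nonneg_right this (pow_nonneg ht0 2)
    have hB3 : v (-(10*r^2)*(x - r)^3) ≤ (1/5) * (v r)^2 * t^3 := by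
      rw [map_mul, v.map_neg, map_mul, map_pow, map_pow]
      have : v 10 * (v r)^2 ≤ (1/5) * (v r)^2 :=
        mul_le_mul_of_nonneg_right hv10 (pow_nonneg hrho0 2)
      exact mul_le_mul_of_nonneg_right this (pow_nonneg ht0 3)
    have hB4 : v (-(5*r)*(x - r)^4) ≤ (1/5) * (v r) * t^4 := by
      rw [map_mul, v.map_neg, map_mul, map_pow, hv5]
    have hB5 : v (25*x^2*(x^2 - x + 1)) ≤ (1/25) * (v r)^2 := by
      rw [map_mul, map_mul, map_pow, hv25, hvx]
      have hq : v (x^2 - x + 1) ≤ 1 := by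
        have hb1 := add_le_bound v hna (a := x^2 + -x) (b := 1) (B := 1)
          ((add_le_bound v hna (a := x^2) (b := -x) le_rfl le_rfl).trans le_rfl) hv1.le
        rw [show (x^2 + -x + 1 : K) = x^2 - x + 1 by ring] at hb1
        refine hb1.trans (max_le (max_le ?_ ?_) le_rfl)
        · rw [map_pow, hvx]; exact pow_le_one₀ hrho0 hρlt1.le
        · rw [v.map_neg, hvx]; exact hρlt1.le
      calc 1/25 * (v r)^2 * v (x^2 - x + 1) ≤ 1/25 * (v r)^2 * 1 :=
        mul_le_mul_of_nonneg_left hq (by positivity)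
      _ = 1/25 * (v r)^2 := by ring
    have hE : v (-(5*r^4 + 25)*(x - r) + -(10*r^3)*(x - r)^2 + -(10*r^2)*(x - r)^3 +
        -(5*r)*(x - r)^4 + 25*x^2*(x^2 - x + 1)) < t^5 := by
      have := add_le_bound v hna
        (add_le_bound v hna (add_le_bound v hna (add_le_bound v hna hB1 hB2) hB3) hB4) hB5
      refine this.trans_lt ?_
      exact max_lt (max_lt (max_lt (max_lt hS1 hS2') hS3') hS4') hS5'
    have hlead : v (-((x - r)^5)) = t^5 := by rw [v.map_neg, map_pow]
    rw [dom_add v hna (by rw [hlead]; exact hE), hlead]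
  -- polynomial machinery
  set P : K[X] := X ^ 4 + C (5 * x + 5) * X ^ 3 + C (15 * x ^ 2 + 5 * x + 15) * X ^ 2 +
      C (25 * x ^ 3 + 25) * X +
      C (-x ^ 5 + 25 * x ^ 4 - 25 * x ^ 3 + 25 * x ^ 2 - 25 * x + 25) with hPdef
  have hmon : P.Monic := by unfold P; monicity!
  have hdeg : P.natDegree = 4 := by unfold P; compute_degree!
  have hsp : P.Splits := IsAlgClosed.splits P
  have hcard : Multiset.card P.roots = 4 := by
    rw [← hdeg]; exact splits_iff_card_roots.mp hsp
  have hcoe0 : P.coeff 0 = -x^5 + 25*x^4 - 25*x^3 + 25*x^2 - 25*x + 25 := by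
    rw [coeff_zero_eq_eval_zero, hPdef]
    simp only [eval_add, eval_mul, eval_pow, eval_C, eval_X]
    ring
  have hprod0 : P.coeff 0 = P.roots.prod := by
    rw [hsp.coeff_zero_eq_prod_roots_of_monic hmon, hdeg]; ring
  have hprodv : (P.roots.map v).prod = t^5 := by
    have hv : v P.roots.prod = t^5 := by rw [← hprod0, hcoe0]; exact hvc0
    rw [← map_multiset_prod v P.roots]; exact hv
  have hroot : ∀ y ∈ P.roots,
      y^4 + (5*x+5)*y^3 + (15*x^2+5*x+15)*y^2 + (25*x^3+25)*y +
        (-x^5 + 25*x^4 - 25*x^3 + 25*x^2 - 25*x + 25) = 0 := by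
    intro y hy
    have h := (mem_roots'.mp hy).2
    simp only [IsRoot, hPdef, eval_add, eval_mul, eval_pow, eval_C, eval_X] at h
    linear_combination h
  have hbound4 : ∀ (p q e f : K) {A B C D : ℝ}, v p ≤ A → v q ≤ B → v e ≤ C → v f ≤ D →
      v (p + q + e + f) ≤ max (max (max A B) C) D := by
    intro p q e f A B C D hp hq he hf
    exact add_le_bound v hna (add_le_bound v hna (add_le_bound v hna hp hq) he) hf
  -- the dichotomy on each root
  have hdich : ∀ y ∈ P.roots, (v y)^2 = 5 * t^5 ∨ v y = s := by
    intro y hy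
    have heq := hroot y hy
    have ha0 : 0 ≤ v y := v.nonneg y
    have hT3 : v ((5*x+5)*y^3) ≤ 1/5 * (v y)^3 := by
      rw [map_mul, map_pow]
      exact mul_le_mul_of_nonneg_right hvc3 (pow_nonneg ha0 3)
    have hT2 : v ((15*x^2+5*x+15)*y^2) = 1/5 * (v y)^2 := by
      rw [map_mul, map_pow, hvc2]
    have hT1 : v ((25*x^3+25)*y) ≤ 1/25 * v y := by
      rw [map_mul]
      exact mul_le_mul_of_nonneg_right hvc1 ha0
    have hT4 : v (y^4) = (v y)^4 := map_pow v y 4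
    rcases lt_trichotomy ((v y)^2) (1/5) with hlt | hmid | hgt
    · rcases lt_trichotomy ((v y)^2) (5 * t^5) with hsm | hsm | hsm
      · exfalso
        have hyeq : (-x^5 + 25*x^4 - 25*x^3 + 25*x^2 - 25*x + 25 : K) =
            -(y^4 + (5*x+5)*y^3 + (15*x^2+5*x+15)*y^2 + (25*x^3+25)*y) := by
          linear_combination heq
        have hle : t^5 ≤ max (max (max ((v y)^4) (1/5 * (v y)^3)) (1/5 * (v y)^2))
            (1/25 * v y) := by
          rw [← hvc0, hyeq, v.map_neg]
          exact hbound4 _ _ _ _ hT4.le hT3 hT2.le hT1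
        obtain ⟨hq1, hq2, hq3, hq4⟩ := case_small htpos ht5 ht5' ha0 hsm
        have hst : max (max (max ((v y)^4) (1/5 * (v y)^3)) (1/5 * (v y)^2))
            (1/25 * v y) < t^5 :=
          max_lt (max_lt (max_lt hq1 hq2) hq3) hq4
        linarith
      · exact Or.inl hsm
      · exfalso
        have hyeq : ((15*x^2+5*x+15)*y^2 : K) =
            -(y^4 + (5*x+5)*y^3 + (25*x^3+25)*y +
              (-x^5 + 25*x^4 - 25*x^3 + 25*x^2 - 25*x + 25)) := by
          linear_combination heq
        have hle : 1/5 * (v y)^2 ≤ max (max (max ((v y)^4) (1/5 * (v y)^3))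
            (1/25 * v y)) (t^5) := by
          rw [← hT2, hyeq, v.map_neg]
          exact hbound4 _ _ _ _ hT4.le hT3 hT1 hvc0.le
        obtain ⟨hq1, hq2, hq3, hq4, hq5⟩ := case_mid ht5' hsm hlt ha0
        have hst : max (max (max ((v y)^4) (1/5 * (v y)^3)) (1/25 * v y)) (t^5) <
            1/5 * (v y)^2 :=
          max_lt (max_lt (max_lt hq1 hq2) hq3) hq4
        linarith
    · right
      have hsq : (v y)^2 = s^2 := by rw [hmid, hs2]
      have hfac : (v y - s) * (v y + s) = 0 := by linear_combination hsq
      rcases mul_eq_zero.mp hfac with h | h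
      · linarith [sub_eq_zero.mp h]
      · exfalso
        have : v y = -s := by linarith
        linarith [this, hs_pos, ha0]
    · exfalso
      have hyeq : (y^4 : K) =
          -((5*x+5)*y^3 + (15*x^2+5*x+15)*y^2 + (25*x^3+25)*y +
            (-x^5 + 25*x^4 - 25*x^3 + 25*x^2 - 25*x + 25)) := by
        linear_combination heq
      have hle : (v y)^4 ≤ max (max (max (1/5 * (v y)^3) (1/5 * (v y)^2))
          (1/25 * v y)) (t^5) := by
        rw [← hT4, hyeq, v.map_neg]
        exact hbound4 _ _ _ _ hT3 hT2.le hT1 hvc0.le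
      obtain ⟨hq1, hq2, hq3, hq4⟩ := case_big (t := t) ht5 hgt ha0
      have hst : max (max (max (1/5 * (v y)^3) (1/5 * (v y)^2)) (1/25 * v y)) (t^5) <
          (v y)^4 :=
        max_lt (max_lt (max_lt hq1 hq2) hq3) hq4
      linarith
  -- exclusivity
  have hnotboth : ∀ y : K, v y = s → ¬ ((v y)^2 = 5 * t^5) := by
    intro y hys hA
    rw [hys, hs2] at hA
    linarith
  -- filter identities
  have hBeq : (P.roots.filter fun y => v y = s) =
      (P.roots.filter fun y => ¬ (v y ^ 2 = 5 * t^5)) := by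
    refine Multiset.filter_congr ?_
    intro y hy
    constructor
    · intro h; exact hnotboth y h
    · intro h
      rcases hdich y hy with h' | h'
      · exact absurd h' h
      · exact h'
  have hsplitM := Multiset.filter_add_not (fun y => v y ^ 2 = 5 * t^5) P.roots
  have hcards : Multiset.card (P.roots.filter fun y => v y ^ 2 = 5 * t^5) +
      Multiset.card (P.roots.filter fun y => ¬ (v y ^ 2 = 5 * t^5)) = 4 := by
    rw [← Multiset.card_add, hsplitM, hcard]
  -- products over the two groups
  have hmapsplit : (t:ℝ)^5 =
      (((P.roots.filter fun y => v y ^ 2 = 5 * t^5).map v).prod) *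
      (((P.roots.filter fun y => ¬ (v y ^ 2 = 5 * t^5)).map v).prod) := by
    conv_lhs => rw [← hprodv]
    conv_lhs => rw [← hsplitM]
    rw [Multiset.map_add, Multiset.prod_add]
  have hPA2 : (((P.roots.filter fun y => v y ^ 2 = 5 * t^5).map v).prod) ^ 2 =
      (5 * t^5) ^ (Multiset.card (P.roots.filter fun y => v y ^ 2 = 5 * t^5)) := by
    rw [← Multiset.prod_map_pow]
    rw [msprod_const (b := 5 * t^5) ?_, Multiset.card_map]
    intro z hz
    rcases Multiset.mem_map.mp hz with ⟨y, hy, rfl⟩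
    exact (Multiset.mem_filter.mp hy).2
  have hPB : (((P.roots.filter fun y => ¬ (v y ^ 2 = 5 * t^5)).map v).prod) =
      s ^ (Multiset.card (P.roots.filter fun y => ¬ (v y ^ 2 = 5 * t^5))) := by
    rw [msprod_const (b := s) ?_, Multiset.card_map]
    intro z hz
    rcases Multiset.mem_map.mp hz with ⟨y, hy, rfl⟩
    rcases hdich y (Multiset.mem_of_mem_filter hy) with h' | h'
    · exact absurd h' (Multiset.mem_filter.mp hy).2
    · exact h'
  have hmain : (t^5)^2 =
      (5 * t^5) ^ (Multiset.card (P.roots.filter fun y => v y ^ 2 = 5 * t^5)) *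
      (1/5) ^ (Multiset.card (P.roots.filter fun y => ¬ (v y ^ 2 = 5 * t^5))) := by
    calc (t^5)^2 = ((((P.roots.filter fun y => v y ^ 2 = 5 * t^5).map v).prod) *
          (((P.roots.filter fun y => ¬ (v y ^ 2 = 5 * t^5)).map v).prod))^2 := by
          rw [← hmapsplit]
    _ = (((P.roots.filter fun y => v y ^ 2 = 5 * t^5).map v).prod)^2 *
        ((((P.roots.filter fun y => ¬ (v y ^ 2 = 5 * t^5)).map v).prod))^2 := by
          rw [mul_pow]
    _ = (5 * t^5) ^ (Multiset.card (P.roots.filter fun y => v y ^ 2 = 5 * t^5)) *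
        (s ^ (Multiset.card (P.roots.filter fun y => ¬ (v y ^ 2 = 5 * t^5))))^2 := by
          rw [hPA2, hPB]
    _ = (5 * t^5) ^ (Multiset.card (P.roots.filter fun y => v y ^ 2 = 5 * t^5)) *
        (s^2) ^ (Multiset.card (P.roots.filter fun y => ¬ (v y ^ 2 = 5 * t^5))) := by
          rw [← pow_mul, mul_comm
            (Multiset.card (P.roots.filter fun y => ¬ (v y ^ 2 = 5 * t^5))) 2, pow_mul]
    _ = (5 * t^5) ^ (Multiset.card (P.roots.filter fun y => v y ^ 2 = 5 * t^5)) *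
        (1/5) ^ (Multiset.card (P.roots.filter fun y => ¬ (v y ^ 2 = 5 * t^5))) := by
          rw [hs2]
  -- counting
  set n := Multiset.card (P.roots.filter fun y => v y ^ 2 = 5 * t^5) with hn_def
  set m := Multiset.card (P.roots.filter fun y => ¬ (v y ^ 2 = 5 * t^5)) with hm_def
  obtain ⟨U, hU⟩ : ∃ U : ℝ, U = t^5 := ⟨_, rfl⟩
  rw [← hU] at hmain
  have hU0 : 0 < U := by rw [hU]; exact pow_pos htpos 5
  have hUlt : U < 1/25 := by rw [hU]; linarith
  have hUgt : 1/125 < U := by rw [hU]; linarith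
  have hcnt : n = 2 ∧ m = 2 := by
    have hm4 : m ≤ 4 := by omega
    interval_cases m
    · exfalso
      have hn4 : n = 4 := by omega
      rw [hn4] at hmain
      exact cnt_case4 hU0 hUlt hmain
    · exfalso
      have hn3 : n = 3 := by omega
      rw [hn3] at hmain
      exact cnt_case3 hU0 hUlt hmain
    · exact ⟨by omega, rfl⟩
    · exfalso
      have hn1 : n = 1 := by omega
      rw [hn1] at hmain
      exact cnt_case1 hU0 hUlt hmain
    · exfalso
      have hn0 : n = 0 := by omega
      rw [hn0] at hmain
      exact cnt_case0 hU0 hUlt hUgt hmain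
  refine ⟨hcard, hcnt.1, ?_, ?_⟩
  · rw [hBeq, ← hm_def]; exact hcnt.2
  · intro y hy hA
    have ha0 : 0 ≤ v y := v.nonneg y
    constructor
    · by_contra hc
      push_neg at hc
      have hle4 := pow_le_pow_left₀ ha0 hc 4
      rw [hw4] at hle4
      have h4 : (v y)^4 = 25 * t^10 := by linear_combination ((v y)^2 + 5*t^5) * hA
      linarith [h10]
    · by_contra hc
      push_neg at hc
      have hle2 := pow_le_pow_left₀ hs_pos.le hc 2
      rw [hs2] at hle2
      linarith [h5t5]
end

section
/- Assume K is algebraically closed (of characteristic zero). Let t ∈ K satisfy ‖t‖ < 1 and ‖t‖⁶ > 5⁻⁵ (i.e. 0 < v₅(t) < 5/6), and let ψ₅ ∈ K[X] be the 5-division polynomial of the Weierstrass curve E_t : y² = x³ + t·x + 1, a polynomial of degree 12 with leading coefficient 5 whose roots are the x-coordinates of the points of exact order 5. Then in the multiset of the 12 roots of ψ₅ in K (with multiplicity), exactly 10 roots x satisfy ‖x‖¹⁰ · ‖t‖ = 1, and exactly 2 roots x satisfy ‖x‖² = 5·‖t‖. (The latter two x-values are the x-coordinates of the nonzero points of the canonical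 subgroup of E_t.) -/
section DivPolyAux

private lemma dpa_Ik {X a : ℝ} {k : ℕ} (ha0 : 0 < a) (ha1 : a < 1) (hX0 : 0 ≤ X)
    (h1 : X ^ 10 * a < 1) (hk10 : k ≤ 10) : X ^ k * a < 1 := by
  rcases le_or_gt X 1 with hx1 | hx1
  · nlinarith [mul_le_mul_of_nonneg_right (pow_le_one₀ hX0 hx1 (n := k)) ha0.le]
  · nlinarith [mul_le_mul_of_nonneg_right (pow_le_pow_right₀ hx1.le hk10) ha0.le]

private lemma dpa_I12 {X a : ℝ} (hX0 : 0 ≤ X) (h1 : X ^ 10 * a < 1) (h2 : X ^ 2 < 5 * a) :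
    1/5 * X ^ 12 < 1 := by
  nlinarith [mul_le_mul_of_nonneg_left h2.le (pow_nonneg hX0 10)]

private lemma dpa_I10 {X a : ℝ} (h1 : X ^ 10 * a < 1) : a * X ^ 10 < 1 := by linarith

private lemma dpa_Ic {X a : ℝ} {k : ℕ} (ha0 : 0 < a) (h5a : 1 < 5 * a)
    (h : X ^ k * a < 1) : 1/5 * X ^ k < 1 := by nlinarith

private lemma dpa_Ia2 {X a : ℝ} {k : ℕ} (ha0 : 0 < a) (ha1 : a < 1)
    (h : X ^ k * a < 1) : 1/5 * a ^ 2 * X ^ k < 1 := by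
  nlinarith [mul_lt_mul_of_pos_left h ha0]

private lemma dpa_Ia2' {X a : ℝ} {k : ℕ} (ha0 : 0 < a) (ha1 : a < 1)
    (h : X ^ k * a < 1) : a ^ 2 * X ^ k < 1 := by
  nlinarith [mul_lt_mul_of_pos_left h ha0]

private lemma dpa_Ia1 {X a : ℝ} {k : ℕ} (ha0 : 0 < a) (h : X ^ k * a < 1) :
    1/5 * a * X ^ k < 1 := by nlinarith

private lemma dpa_IIX {X a : ℝ} (ha0 : 0 < a) (ha1 : a < 1) (hX0 : 0 ≤ X)
    (h1 : 1 < X ^ 10 * a) : 1 < X := by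
  by_contra h
  push_neg at h
  nlinarith [mul_le_mul_of_nonneg_right (pow_le_one₀ hX0 h (n := 10)) ha0.le]

private lemma dpa_II12 {X a : ℝ} (hXpos : 0 < X) (h2 : X ^ 2 < 5 * a) :
    1/5 * X ^ 12 < a * X ^ 10 := by
  nlinarith [mul_lt_mul_of_pos_left h2 (pow_pos hXpos 10)]

private lemma dpa_IIstep {X a c : ℝ} {k : ℕ} (hX1 : 1 < X) (hc : 0 ≤ c) (hcA : c < a)
    (hk : k ≤ 10) : c * X ^ k < a * X ^ 10 := by
  have hXpos : 0 < X := lt_trans zero_lt_one hX1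
  calc c * X ^ k ≤ c * X ^ 10 :=
        mul_le_mul_of_nonneg_left (pow_le_pow_right₀ hX1.le hk) hc
  _ < a * X ^ 10 := mul_lt_mul_of_pos_right hcA (pow_pos hXpos 10)

private lemma dpa_IIc {X a : ℝ} (h1 : 1 < X ^ 10 * a) : 1 < a * X ^ 10 := by linarith

private lemma dpa_fifth {a : ℝ} (h5a : 1 < 5 * a) : (1/5 : ℝ) < a := by linarith

private lemma dpa_sq5 {a : ℝ} (ha0 : 0 < a) (ha1 : a < 1) : 1/5 * a ^ 2 < a := by nlinarith

private lemma dpa_a5 {a : ℝ} (ha0 : 0 < a) : 1/5 * a < a := by linarith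

private lemma dpa_sq {a : ℝ} (ha0 : 0 < a) (ha1 : a < 1) : a ^ 2 < a := by nlinarith

private lemma dpa_IIIX {X : ℝ} (hX0 : 0 ≤ X) (h : 1 < X ^ 2) : 1 < X := by
  by_contra h'
  push_neg at h'
  nlinarith [pow_le_one₀ hX0 h' (n := 2)]

private lemma dpa_III3 {X : ℝ} (hX1 : 1 < X) : 1 < X ^ 3 := by
  calc (1:ℝ) = 1 ^ 3 := by norm_num
  _ < X ^ 3 := pow_lt_pow_left₀ hX1 zero_le_one (by norm_num)

private lemma dpa_III10 {X a : ℝ} (hXpos : 0 < X) (h2 : 5 * a < X ^ 2) :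
    a * X ^ 10 < 1/5 * X ^ 12 := by
  nlinarith [mul_lt_mul_of_pos_left h2 (pow_pos hXpos 10)]

private lemma dpa_IIIstep {X c : ℝ} {k : ℕ} (hX1 : 1 < X) (hc : 0 ≤ c)
    (h5c : 5 * c < X ^ 3) (hk9 : k ≤ 9) : c * X ^ k < 1/5 * X ^ 12 := by
  have hXpos : 0 < X := lt_trans zero_lt_one hX1
  have e1 : c * X ^ k ≤ c * X ^ 9 :=
    mul_le_mul_of_nonneg_left (pow_le_pow_right₀ hX1.le hk9) hc
  have e2 : c * X ^ 9 < (1/5 * X ^ 3) * X ^ 9 :=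
    mul_lt_mul_of_pos_right (by linarith) (pow_pos hXpos 9)
  nlinarith [e1, e2]

private lemma dpa_III0 {X a : ℝ} (ha0 : 0 < a) (hq5 : 1 < 5 ^ 5 * a ^ 6)
    (h2 : 5 * a < X ^ 2) : (1 : ℝ) < 1/5 * X ^ 12 := by
  nlinarith [pow_lt_pow_left₀ h2 (by positivity : (0:ℝ) ≤ 5 * a) (by norm_num : (6:ℕ) ≠ 0), hq5]

private lemma dpa_IIId1 {X : ℝ} (hX3 : 1 < X ^ 3) : 5 * (1/5 : ℝ) < X ^ 3 := by linarith

private lemma dpa_IIId2 {X a : ℝ} (ha0 : 0 < a) (ha1 : a < 1) (hX3 : 1 < X ^ 3) :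
    5 * (1/5 * a ^ 2) < X ^ 3 := by nlinarith

private lemma dpa_IIId3 {X a : ℝ} (ha0 : 0 < a) (ha1 : a < 1) (hX3 : 1 < X ^ 3) :
    5 * (1/5 * a) < X ^ 3 := by nlinarith

private lemma dpa_IIId4 {X a : ℝ} (ha0 : 0 < a) (ha1 : a < 1) (hX1 : 1 < X)
    (h2 : 5 * a < X ^ 2) : 5 * a ^ 2 < X ^ 3 := by
  have hXpos : 0 < X := lt_trans zero_lt_one hX1
  nlinarith [mul_lt_mul_of_pos_left hX1 (pow_pos hXpos 2)]

private lemma dpa_qgt {a : ℝ} (hq5 : 1 < 5 ^ 5 * a ^ 6) : 1 < (5 * a) ^ 5 * a := by nlinarith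

end DivPolyAux

set_option maxHeartbeats 2000000 in
open Polynomial in
open scoped Classical in
/-- For `0 < v₅(t) < 5/6` (i.e. `‖t‖ < 1` and `‖t‖⁶ > 5⁻⁵`), the 5-division
polynomial of `E_t : y² = x³ + tx + 1` has 12 roots (with multiplicity), of which
exactly 10 satisfy `‖x‖¹⁰·‖t‖ = 1` and exactly 2 (the `x`-coordinates of the
nonzero points of the canonical subgroup) satisfy `‖x‖² = 5‖t‖`. -/
theorem div_poly_roots_canonical_subgroup {K : Type*} [Field K] [CharZero K]
    [IsAlgClosed K] (v : AbsoluteValue K ℝ) (hna : IsNonarchimedean v)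
    (hQ : ∀ q : ℚ, v (q : K) = (padicNorm 5 q : ℝ))
    (t : K) (ht₁ : v t < 1) (ht₂ : (5 : ℝ)⁻¹ ^ 5 < v t ^ 6) :
    ∀ ψ₅ : K[X],
      ψ₅ = C 5 * X ^ 12 + C (62 * t) * X ^ 10 + C 380 * X ^ 9 + C (-105 * t ^ 2) * X ^ 8 +
        C (240 * t) * X ^ 7 + C (-300 * t ^ 3 - 240) * X ^ 6 + C (-696 * t ^ 2) * X ^ 5 +
        C (-125 * t ^ 4 - 1920 * t) * X ^ 4 + C (-80 * t ^ 3 - 1600) * X ^ 3 +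
        C (-50 * t ^ 5 - 240 * t ^ 2) * X ^ 2 + C (-100 * t ^ 4 - 640 * t) * X +
        C (t ^ 6 - 32 * t ^ 3 - 256) →
      Multiset.card ψ₅.roots = 12 ∧
      Multiset.card (ψ₅.roots.filter fun x => v x ^ 10 * v t = 1) = 10 ∧
      Multiset.card (ψ₅.roots.filter fun x => v x ^ 2 = 5 * v t) = 2 := by
  intro ψ₅ hψ
  haveI : Fact (Nat.Prime 5) := ⟨by norm_num⟩
  -- values of `v` on rational numbers
  have hv5K : v (5 : K) = 1/5 := by
    have h := hQ 5
    rw [show (5:ℚ) = ((5:ℕ):ℚ) by norm_num, padicNorm.padicNorm_p (by norm_num)] at h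
    rw [show (((5:ℕ):ℚ):K) = (5:K) by push_cast; ring] at h
    rw [h]; norm_num
  have hvnat : ∀ n : ℕ, v ((n : ℕ) : K) ≤ 1 := by
    intro n
    have h := hQ n
    rw [show ((n:ℚ):K) = ((n:ℕ):K) by push_cast; ring] at h
    rw [h]
    exact_mod_cast padicNorm.of_nat (p := 5) n
  have hv62 : v (62 : K) = 1 := by
    have h := hQ 62
    rw [show (62:ℚ) = ((62:ℤ):ℚ) by norm_num,
      (padicNorm.int_eq_one_iff (p := 5) 62).2 (by decide)] at h
    rw [show (((62:ℤ):ℚ):K) = (62:K) by push_cast; ring] at h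
    rw [h]; norm_num
  have hv256 : v (256 : K) = 1 := by
    have h := hQ 256
    rw [show (256:ℚ) = ((256:ℤ):ℚ) by norm_num,
      (padicNorm.int_eq_one_iff (p := 5) 256).2 (by decide)] at h
    rw [show (((256:ℤ):ℚ):K) = (256:K) by push_cast; ring] at h
    rw [h]; norm_num
  have hdvd : ∀ n : ℕ, v ((5:K) * ((n:ℕ):K)) ≤ 1/5 := by
    intro n
    rw [map_mul, hv5K]
    exact mul_le_of_le_one_right (by norm_num) (hvnat n)
  have h380 : v (380:K) ≤ 1/5 := by
    rw [show (380:K) = (5:K) * ((76:ℕ):K) by norm_num]; exact hdvd 76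
  have h105 : v (105:K) ≤ 1/5 := by
    rw [show (105:K) = (5:K) * ((21:ℕ):K) by norm_num]; exact hdvd 21
  have h240 : v (240:K) ≤ 1/5 := by
    rw [show (240:K) = (5:K) * ((48:ℕ):K) by norm_num]; exact hdvd 48
  have h300 : v (300:K) ≤ 1/5 := by
    rw [show (300:K) = (5:K) * ((60:ℕ):K) by norm_num]; exact hdvd 60
  have h125 : v (125:K) ≤ 1/5 := by
    rw [show (125:K) = (5:K) * ((25:ℕ):K) by norm_num]; exact hdvd 25
  have h1920 : v (1920:K) ≤ 1/5 := by
    rw [show (1920:K) = (5:K) * ((384:ℕ):K) by norm_num]; exact hdvd 384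
  have h80 : v (80:K) ≤ 1/5 := by
    rw [show (80:K) = (5:K) * ((16:ℕ):K) by norm_num]; exact hdvd 16
  have h1600 : v (1600:K) ≤ 1/5 := by
    rw [show (1600:K) = (5:K) * ((320:ℕ):K) by norm_num]; exact hdvd 320
  have h50 : v (50:K) ≤ 1/5 := by
    rw [show (50:K) = (5:K) * ((10:ℕ):K) by norm_num]; exact hdvd 10
  have h100 : v (100:K) ≤ 1/5 := by
    rw [show (100:K) = (5:K) * ((20:ℕ):K) by norm_num]; exact hdvd 20
  have h640 : v (640:K) ≤ 1/5 := by
    rw [show (640:K) = (5:K) * ((128:ℕ):K) by norm_num]; exact hdvd 128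
  have h696 : v (696:K) ≤ 1 := by
    rw [show (696:K) = ((696:ℕ):K) by norm_num]; exact hvnat 696
  have h32 : v (32:K) ≤ 1 := by
    rw [show (32:K) = ((32:ℕ):K) by norm_num]; exact hvnat 32
  -- basic real facts about `a = v t`
  have ha6 : (0:ℝ) < v t ^ 6 := lt_trans (by norm_num) ht₂
  have ha0 : 0 < v t := by
    by_contra h
    push_neg at h
    have h0 : v t = 0 := le_antisymm h (v.nonneg t)
    rw [h0] at ha6; norm_num at ha6
  have hq5 : (1:ℝ) < 5^5 * v t ^ 6 := by nlinarith [ht₂]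
  have h5a : (1:ℝ) < 5 * v t := by
    by_contra h
    push_neg at h
    have h6 : (5 * v t)^6 ≤ 1 := pow_le_one₀ (by positivity) h
    nlinarith [ht₂]
  -- nonarchimedean helpers
  have addle : ∀ (p q : K) (M : ℝ), v p ≤ M → v q ≤ M → v (p + q) ≤ M :=
    fun p q M h1 h2 => le_trans (hna p q) (max_le h1 h2)
  have addlt : ∀ {p q : K} {M : ℝ}, v p < M → v q < M → v (p + q) < M :=
    fun h1 h2 => lt_of_le_of_lt (hna _ _) (max_lt h1 h2)
  have veq : ∀ p q : K, v p < v q → v (p + q) = v q := by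
    intro p q h
    refine le_antisymm (le_trans (hna p q) (max_le h.le le_rfl)) ?_
    have h2 : v q ≤ max (v (p+q)) (v p) := by
      calc v q = v ((p+q) + (-p)) := by ring_nf
      _ ≤ max (v (p+q)) (v (-p)) := hna _ _
      _ = max (v (p+q)) (v p) := by rw [v.map_neg]
    rcases max_cases (v (p+q)) (v p) with ⟨he, _⟩ | ⟨he, _⟩
    · rw [he] at h2; exact h2
    · rw [he] at h2; linarith
  -- coefficient bounds
  have hco10 : v (62*t) = v t := by rw [map_mul, hv62, one_mul]
  have hc8 : v (-(105*t^2)) ≤ 1/5 * v t^2 := by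
    rw [v.map_neg, map_mul, map_pow]
    exact mul_le_mul_of_nonneg_right h105 (by positivity)
  have hc7 : v (240*t) ≤ 1/5 * v t := by
    rw [map_mul]
    exact mul_le_mul_of_nonneg_right h240 (v.nonneg t)
  have ha3le : v t ^ 3 ≤ 1 := pow_le_one₀ (v.nonneg t) ht₁.le
  have hc6 : v (-(300*t^3) - 240) ≤ 1/5 := by
    rw [show (-(300*t^3) - 240 : K) = (-(300*t^3)) + (-(240:K)) by ring]
    apply addle
    · rw [v.map_neg, map_mul, map_pow]
      exact le_trans (mul_le_of_le_one_right (v.nonneg (300:K)) ha3le) h300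
    · rw [v.map_neg]; exact h240
  have hc5 : v (-(696*t^2)) ≤ v t^2 := by
    rw [v.map_neg, map_mul, map_pow]
    exact mul_le_of_le_one_left (by positivity) h696
  have hc4 : v (-(125*t^4) - 1920*t) ≤ 1/5 * v t := by
    rw [show (-(125*t^4) - 1920*t : K) = (-(125*t^4)) + (-(1920*t)) by ring]
    apply addle
    · rw [v.map_neg, map_mul, map_pow]
      have h4 : v t ^ 4 ≤ v t := by
        calc v t ^ 4 ≤ v t ^ 1 := pow_le_pow_of_le_one (v.nonneg t) ht₁.le (by norm_num)
        _ = v t := pow_one _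
      exact mul_le_mul h125 h4 (by positivity) (by norm_num)
    · rw [v.map_neg, map_mul]
      exact mul_le_mul_of_nonneg_right h1920 (v.nonneg t)
  have hc3 : v (-(80*t^3) - 1600) ≤ 1/5 := by
    rw [show (-(80*t^3) - 1600 : K) = (-(80*t^3)) + (-(1600:K)) by ring]
    apply addle
    · rw [v.map_neg, map_mul, map_pow]
      exact le_trans (mul_le_of_le_one_right (v.nonneg (80:K)) ha3le) h80
    · rw [v.map_neg]; exact h1600
  have hc2 : v (-(50*t^5) - 240*t^2) ≤ 1/5 * v t^2 := by
    rw [show (-(50*t^5) - 240*t^2 : K) = (-(50*t^5)) + (-(240*t^2)) by ring]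
    apply addle
    · rw [v.map_neg, map_mul, map_pow]
      have h5' : v t ^ 5 ≤ v t ^ 2 := pow_le_pow_of_le_one (v.nonneg t) ht₁.le (by norm_num)
      exact mul_le_mul h50 h5' (by positivity) (by norm_num)
    · rw [v.map_neg, map_mul, map_pow]
      exact mul_le_mul_of_nonneg_right h240 (by positivity)
  have hc1 : v (-(100*t^4) - 640*t) ≤ 1/5 * v t := by
    rw [show (-(100*t^4) - 640*t : K) = (-(100*t^4)) + (-(640*t)) by ring]
    apply addle
    · rw [v.map_neg, map_mul, map_pow]
      have h4 : v t ^ 4 ≤ v t := by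
        calc v t ^ 4 ≤ v t ^ 1 := pow_le_pow_of_le_one (v.nonneg t) ht₁.le (by norm_num)
        _ = v t := pow_one _
      exact mul_le_mul h100 h4 (by positivity) (by norm_num)
    · rw [v.map_neg, map_mul]
      exact mul_le_mul_of_nonneg_right h640 (v.nonneg t)
  have hc0 : v (t^6 - 32*t^3 - 256) = 1 := by
    have h1 : v (t^6 + (-(32*t^3))) < v (-(256:K)) := by
      rw [v.map_neg, hv256]
      apply lt_of_le_of_lt (hna _ _) (max_lt ?_ ?_)
      · rw [map_pow]
        exact pow_lt_one₀ (v.nonneg t) ht₁ (by norm_num)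
      · rw [v.map_neg, map_mul, map_pow]
        have h3 : v t ^ 3 < 1 := pow_lt_one₀ (v.nonneg t) ht₁ (by norm_num)
        exact lt_of_le_of_lt (mul_le_of_le_one_left (pow_nonneg (v.nonneg t) 3) h32) h3
    rw [show (t^6 - 32*t^3 - 256 : K) = (t^6 + (-(32*t^3))) + (-(256:K)) by ring,
      veq _ _ h1, v.map_neg, hv256]
  -- polynomial administration
  have hdeg : ψ₅.natDegree = 12 := by rw [hψ]; compute_degree!
  have hev : ∀ x : K, ψ₅.eval x =
      5*x^12 + 62*t*x^10 + 380*x^9 + (-(105*t^2))*x^8 + 240*t*x^7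
      + (-(300*t^3) - 240)*x^6 + (-(696*t^2))*x^5 + (-(125*t^4) - 1920*t)*x^4
      + (-(80*t^3) - 1600)*x^3 + (-(50*t^5) - 240*t^2)*x^2 + (-(100*t^4) - 640*t)*x
      + (t^6 - 32*t^3 - 256) := by
    intro x
    rw [hψ]
    simp only [eval_add, eval_mul, eval_pow, eval_C, eval_X]
    ring
  have hlead : ψ₅.leadingCoeff = 5 := by
    rw [Polynomial.leadingCoeff, hdeg, hψ]
    simp only [coeff_add, coeff_C_mul, coeff_X_pow, coeff_C, Polynomial.coeff_X]
    norm_num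
  have hcard : Multiset.card ψ₅.roots = 12 := by
    rw [← hdeg]
    exact (Polynomial.splits_iff_card_roots).1 (IsAlgClosed.splits ψ₅)
  -- the key dichotomy for roots
  have key : ∀ x : K, ψ₅.eval x = 0 → v x ^ 10 * v t = 1 ∨ v x ^ 2 = 5 * v t := by
    intro x hx
    have hev' : 5*x^12 + 62*t*x^10 + 380*x^9 + (-(105*t^2))*x^8 + 240*t*x^7
        + (-(300*t^3) - 240)*x^6 + (-(696*t^2))*x^5 + (-(125*t^4) - 1920*t)*x^4
        + (-(80*t^3) - 1600)*x^3 + (-(50*t^5) - 240*t^2)*x^2 + (-(100*t^4) - 640*t)*x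
        + (t^6 - 32*t^3 - 256) = 0 := by rw [← hev x]; exact hx
    have hX0 : 0 ≤ v x := v.nonneg x
    have hb12 : v (5*x^12) = 1/5 * v x ^ 12 := by rw [map_mul, map_pow, hv5K]
    have hb10 : v (62*t*x^10) = v t * v x ^ 10 := by rw [map_mul, map_pow, hco10]
    have hb9 : v (380*x^9) ≤ 1/5 * v x ^ 9 := by
      rw [map_mul, map_pow]
      exact mul_le_mul_of_nonneg_right h380 (by positivity)
    have hb8 : v ((-(105*t^2))*x^8) ≤ 1/5 * v t^2 * v x ^ 8 := by
      rw [map_mul, map_pow]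
      exact mul_le_mul_of_nonneg_right hc8 (by positivity)
    have hb7 : v (240*t*x^7) ≤ 1/5 * v t * v x ^ 7 := by
      rw [map_mul, map_pow]
      exact mul_le_mul_of_nonneg_right hc7 (by positivity)
    have hb6 : v ((-(300*t^3) - 240)*x^6) ≤ 1/5 * v x ^ 6 := by
      rw [map_mul, map_pow]
      exact mul_le_mul_of_nonneg_right hc6 (by positivity)
    have hb5 : v ((-(696*t^2))*x^5) ≤ v t^2 * v x ^ 5 := by
      rw [map_mul, map_pow]
      exact mul_le_mul_of_nonneg_right hc5 (by positivity)
    have hb4 : v ((-(125*t^4) - 1920*t)*x^4) ≤ 1/5 * v t * v x ^ 4 := by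
      rw [map_mul, map_pow]
      exact mul_le_mul_of_nonneg_right hc4 (by positivity)
    have hb3 : v ((-(80*t^3) - 1600)*x^3) ≤ 1/5 * v x ^ 3 := by
      rw [map_mul, map_pow]
      exact mul_le_mul_of_nonneg_right hc3 (by positivity)
    have hb2 : v ((-(50*t^5) - 240*t^2)*x^2) ≤ 1/5 * v t^2 * v x ^ 2 := by
      rw [map_mul, map_pow]
      exact mul_le_mul_of_nonneg_right hc2 (by positivity)
    have hb1 : v ((-(100*t^4) - 640*t)*x) ≤ 1/5 * v t * v x := by
      rw [map_mul]
      exact mul_le_mul_of_nonneg_right hc1 (v.nonneg x)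
    rcases lt_trichotomy (v x ^ 2) (5 * v t) with h2 | h2 | h2
    · rcases lt_trichotomy (v x ^ 10 * v t) 1 with h1 | h1 | h1
      · -- Case I : dominant constant term, contradiction
        exfalso
        have g12 : v (5*x^12) < 1 := by
          rw [hb12]; exact dpa_I12 hX0 h1 h2
        have g10 : v (62*t*x^10) < 1 := by
          rw [hb10]; exact dpa_I10 h1
        have g9 : v (380*x^9) < 1 :=
          lt_of_le_of_lt hb9 (dpa_Ic ha0 h5a (dpa_Ik ha0 ht₁ hX0 h1 (by norm_num)))
        have g8 : v ((-(105*t^2))*x^8) < 1 :=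
          lt_of_le_of_lt hb8 (dpa_Ia2 ha0 ht₁ (dpa_Ik ha0 ht₁ hX0 h1 (by norm_num)))
        have g7 : v (240*t*x^7) < 1 :=
          lt_of_le_of_lt hb7 (dpa_Ia1 ha0 (dpa_Ik ha0 ht₁ hX0 h1 (by norm_num)))
        have g6 : v ((-(300*t^3) - 240)*x^6) < 1 :=
          lt_of_le_of_lt hb6 (dpa_Ic ha0 h5a (dpa_Ik ha0 ht₁ hX0 h1 (by norm_num)))
        have g5 : v ((-(696*t^2))*x^5) < 1 :=
          lt_of_le_of_lt hb5 (dpa_Ia2' ha0 ht₁ (dpa_Ik ha0 ht₁ hX0 h1 (by norm_num)))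
        have g4 : v ((-(125*t^4) - 1920*t)*x^4) < 1 :=
          lt_of_le_of_lt hb4 (dpa_Ia1 ha0 (dpa_Ik ha0 ht₁ hX0 h1 (by norm_num)))
        have g3 : v ((-(80*t^3) - 1600)*x^3) < 1 :=
          lt_of_le_of_lt hb3 (dpa_Ic ha0 h5a (dpa_Ik ha0 ht₁ hX0 h1 (by norm_num)))
        have g2 : v ((-(50*t^5) - 240*t^2)*x^2) < 1 :=
          lt_of_le_of_lt hb2 (dpa_Ia2 ha0 ht₁ (dpa_Ik ha0 ht₁ hX0 h1 (by norm_num)))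
        have g1 : v ((-(100*t^4) - 640*t)*x) < 1 := by
          refine lt_of_le_of_lt hb1 ?_
          have h' := dpa_Ia1 ha0 (dpa_Ik ha0 ht₁ hX0 h1 (by norm_num : 1 ≤ 10))
          calc 1/5 * v t * v x = 1/5 * v t * v x ^ 1 := by ring
          _ < 1 := h'
        have hs : (t^6 - 32*t^3 - 256 : K) =
            -(5*x^12 + 62*t*x^10 + 380*x^9 + (-(105*t^2))*x^8 + 240*t*x^7
            + (-(300*t^3) - 240)*x^6 + (-(696*t^2))*x^5 + (-(125*t^4) - 1920*t)*x^4
            + (-(80*t^3) - 1600)*x^3 + (-(50*t^5) - 240*t^2)*x^2 + (-(100*t^4) - 640*t)*x) := by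
          linear_combination hev'
        have hbig : v (5*x^12 + 62*t*x^10 + 380*x^9 + (-(105*t^2))*x^8 + 240*t*x^7
            + (-(300*t^3) - 240)*x^6 + (-(696*t^2))*x^5 + (-(125*t^4) - 1920*t)*x^4
            + (-(80*t^3) - 1600)*x^3 + (-(50*t^5) - 240*t^2)*x^2 + (-(100*t^4) - 640*t)*x)
            < 1 := by
          repeat' apply addlt
          all_goals assumption
        have h' : v (t^6 - 32*t^3 - 256) = v (5*x^12 + 62*t*x^10 + 380*x^9
            + (-(105*t^2))*x^8 + 240*t*x^7 + (-(300*t^3) - 240)*x^6 + (-(696*t^2))*x^5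
            + (-(125*t^4) - 1920*t)*x^4 + (-(80*t^3) - 1600)*x^3
            + (-(50*t^5) - 240*t^2)*x^2 + (-(100*t^4) - 640*t)*x) := by
          rw [hs, v.map_neg]
        rw [hc0] at h'
        rw [← h'] at hbig
        exact lt_irrefl 1 hbig
      · exact Or.inl h1
      · -- Case II : dominant x^10 term, contradiction
        exfalso
        have hX1 : 1 < v x := dpa_IIX ha0 ht₁ hX0 h1
        have g12 : v (5*x^12) < v t * v x ^ 10 := by
          rw [hb12]; exact dpa_II12 (lt_trans zero_lt_one hX1) h2
        have g9 : v (380*x^9) < v t * v x ^ 10 :=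
          lt_of_le_of_lt hb9 (dpa_IIstep hX1 (by norm_num) (dpa_fifth h5a) (by norm_num))
        have g8 : v ((-(105*t^2))*x^8) < v t * v x ^ 10 :=
          lt_of_le_of_lt hb8 (dpa_IIstep hX1 (by positivity) (dpa_sq5 ha0 ht₁) (by norm_num))
        have g7 : v (240*t*x^7) < v t * v x ^ 10 :=
          lt_of_le_of_lt hb7 (dpa_IIstep hX1 (by positivity) (dpa_a5 ha0) (by norm_num))
        have g6 : v ((-(300*t^3) - 240)*x^6) < v t * v x ^ 10 :=
          lt_of_le_of_lt hb6 (dpa_IIstep hX1 (by norm_num) (dpa_fifth h5a) (by norm_num))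
        have g5 : v ((-(696*t^2))*x^5) < v t * v x ^ 10 :=
          lt_of_le_of_lt hb5 (dpa_IIstep hX1 (by positivity) (dpa_sq ha0 ht₁) (by norm_num))
        have g4 : v ((-(125*t^4) - 1920*t)*x^4) < v t * v x ^ 10 :=
          lt_of_le_of_lt hb4 (dpa_IIstep hX1 (by positivity) (dpa_a5 ha0) (by norm_num))
        have g3 : v ((-(80*t^3) - 1600)*x^3) < v t * v x ^ 10 :=
          lt_of_le_of_lt hb3 (dpa_IIstep hX1 (by norm_num) (dpa_fifth h5a) (by norm_num))
        have g2 : v ((-(50*t^5) - 240*t^2)*x^2) < v t * v x ^ 10 :=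
          lt_of_le_of_lt hb2 (dpa_IIstep hX1 (by positivity) (dpa_sq5 ha0 ht₁) (by norm_num))
        have g1 : v ((-(100*t^4) - 640*t)*x) < v t * v x ^ 10 := by
          refine lt_of_le_of_lt hb1 ?_
          have h' := dpa_IIstep (a := v t) (k := 1) hX1 (by positivity) (dpa_a5 ha0)
            (by norm_num)
          calc 1/5 * v t * v x = 1/5 * v t * v x ^ 1 := by ring
          _ < v t * v x ^ 10 := h'
        have g0 : v (t^6 - 32*t^3 - 256) < v t * v x ^ 10 := by
          rw [hc0]; exact dpa_IIc h1
        have hs : (62*t*x^10 : K) =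
            -(5*x^12 + 380*x^9 + (-(105*t^2))*x^8 + 240*t*x^7
            + (-(300*t^3) - 240)*x^6 + (-(696*t^2))*x^5 + (-(125*t^4) - 1920*t)*x^4
            + (-(80*t^3) - 1600)*x^3 + (-(50*t^5) - 240*t^2)*x^2 + (-(100*t^4) - 640*t)*x
            + (t^6 - 32*t^3 - 256)) := by
          linear_combination hev'
        have hbig : v (5*x^12 + 380*x^9 + (-(105*t^2))*x^8 + 240*t*x^7
            + (-(300*t^3) - 240)*x^6 + (-(696*t^2))*x^5 + (-(125*t^4) - 1920*t)*x^4
            + (-(80*t^3) - 1600)*x^3 + (-(50*t^5) - 240*t^2)*x^2 + (-(100*t^4) - 640*t)*x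
            + (t^6 - 32*t^3 - 256)) < v t * v x ^ 10 := by
          repeat' apply addlt
          all_goals assumption
        have h' : v (62*t*x^10) = v (5*x^12 + 380*x^9 + (-(105*t^2))*x^8 + 240*t*x^7
            + (-(300*t^3) - 240)*x^6 + (-(696*t^2))*x^5 + (-(125*t^4) - 1920*t)*x^4
            + (-(80*t^3) - 1600)*x^3 + (-(50*t^5) - 240*t^2)*x^2 + (-(100*t^4) - 640*t)*x
            + (t^6 - 32*t^3 - 256)) := by
          rw [hs, v.map_neg]
        rw [hb10] at h'
        rw [← h'] at hbig
        exact lt_irrefl _ hbig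
    · exact Or.inr h2
    · -- Case III : dominant x^12 term, contradiction
      exfalso
      have hX1 : 1 < v x := dpa_IIIX hX0 (lt_trans h5a h2)
      have hX3 : 1 < v x ^ 3 := dpa_III3 hX1
      have g10 : v (62*t*x^10) < 1/5 * v x ^ 12 := by
        rw [hb10]; exact dpa_III10 (lt_trans zero_lt_one hX1) h2
      have g9 : v (380*x^9) < 1/5 * v x ^ 12 :=
        lt_of_le_of_lt hb9 (dpa_IIIstep hX1 (by norm_num) (dpa_IIId1 hX3) (by norm_num))
      have g8 : v ((-(105*t^2))*x^8) < 1/5 * v x ^ 12 :=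
        lt_of_le_of_lt hb8 (dpa_IIIstep hX1 (by positivity) (dpa_IIId2 ha0 ht₁ hX3)
          (by norm_num))
      have g7 : v (240*t*x^7) < 1/5 * v x ^ 12 :=
        lt_of_le_of_lt hb7 (dpa_IIIstep hX1 (by positivity) (dpa_IIId3 ha0 ht₁ hX3)
          (by norm_num))
      have g6 : v ((-(300*t^3) - 240)*x^6) < 1/5 * v x ^ 12 :=
        lt_of_le_of_lt hb6 (dpa_IIIstep hX1 (by norm_num) (dpa_IIId1 hX3) (by norm_num))
      have g5 : v ((-(696*t^2))*x^5) < 1/5 * v x ^ 12 :=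
        lt_of_le_of_lt hb5 (dpa_IIIstep hX1 (by positivity) (dpa_IIId4 ha0 ht₁ hX1 h2)
          (by norm_num))
      have g4 : v ((-(125*t^4) - 1920*t)*x^4) < 1/5 * v x ^ 12 :=
        lt_of_le_of_lt hb4 (dpa_IIIstep hX1 (by positivity) (dpa_IIId3 ha0 ht₁ hX3)
          (by norm_num))
      have g3 : v ((-(80*t^3) - 1600)*x^3) < 1/5 * v x ^ 12 :=
        lt_of_le_of_lt hb3 (dpa_IIIstep hX1 (by norm_num) (dpa_IIId1 hX3) (by norm_num))
      have g2 : v ((-(50*t^5) - 240*t^2)*x^2) < 1/5 * v x ^ 12 :=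
        lt_of_le_of_lt hb2 (dpa_IIIstep hX1 (by positivity) (dpa_IIId2 ha0 ht₁ hX3)
          (by norm_num))
      have g1 : v ((-(100*t^4) - 640*t)*x) < 1/5 * v x ^ 12 := by
        refine lt_of_le_of_lt hb1 ?_
        have h' := dpa_IIIstep (k := 1) hX1 (by positivity : (0:ℝ) ≤ 1/5 * v t)
          (dpa_IIId3 ha0 ht₁ hX3) (by norm_num)
        calc 1/5 * v t * v x = 1/5 * v t * v x ^ 1 := by ring
        _ < 1/5 * v x ^ 12 := h'
      have g0 : v (t^6 - 32*t^3 - 256) < 1/5 * v x ^ 12 := by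
        rw [hc0]; exact dpa_III0 ha0 hq5 h2
      have hs : (5*x^12 : K) =
          -(62*t*x^10 + 380*x^9 + (-(105*t^2))*x^8 + 240*t*x^7
          + (-(300*t^3) - 240)*x^6 + (-(696*t^2))*x^5 + (-(125*t^4) - 1920*t)*x^4
          + (-(80*t^3) - 1600)*x^3 + (-(50*t^5) - 240*t^2)*x^2 + (-(100*t^4) - 640*t)*x
          + (t^6 - 32*t^3 - 256)) := by
        linear_combination hev'
      have hbig : v (62*t*x^10 + 380*x^9 + (-(105*t^2))*x^8 + 240*t*x^7
          + (-(300*t^3) - 240)*x^6 + (-(696*t^2))*x^5 + (-(125*t^4) - 1920*t)*x^4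
          + (-(80*t^3) - 1600)*x^3 + (-(50*t^5) - 240*t^2)*x^2 + (-(100*t^4) - 640*t)*x
          + (t^6 - 32*t^3 - 256)) < 1/5 * v x ^ 12 := by
        repeat' apply addlt
        all_goals assumption
      have h' : v (5*x^12) = v (62*t*x^10 + 380*x^9 + (-(105*t^2))*x^8 + 240*t*x^7
          + (-(300*t^3) - 240)*x^6 + (-(696*t^2))*x^5 + (-(125*t^4) - 1920*t)*x^4
          + (-(80*t^3) - 1600)*x^3 + (-(50*t^5) - 240*t^2)*x^2 + (-(100*t^4) - 640*t)*x
          + (t^6 - 32*t^3 - 256)) := by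
        rw [hs, v.map_neg]
      rw [hb12] at h'
      rw [← h'] at hbig
      exact lt_irrefl _ hbig
  -- the counting argument
  set pA : K → Prop := fun x => v x ^ 10 * v t = 1 with hpA
  set pB : K → Prop := fun x => v x ^ 2 = 5 * v t with hpB
  have hdisj : ∀ r : K, pA r → pB r → False := by
    intro r h1 h2
    rw [hpA] at h1
    rw [hpB] at h2
    have h3 : (v r ^ 2) ^ 5 * v t = 1 := by rw [← pow_mul]; exact h1
    rw [h2] at h3
    exact absurd h3 (ne_of_gt (dpa_qgt hq5))
  have hsplitf : ψ₅.roots.filter pB = ψ₅.roots.filter (fun x => ¬ pA x) :=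
    Multiset.filter_congr (fun r hr =>
      ⟨fun h hA => hdisj r hA h,
       fun h => (key r (Polynomial.isRoot_of_mem_roots hr)).resolve_left h⟩)
  have hadd2 : ψ₅.roots.filter pA + ψ₅.roots.filter pB = ψ₅.roots := by
    rw [hsplitf]
    exact Multiset.filter_add_not pA ψ₅.roots
  have hcards : Multiset.card (ψ₅.roots.filter pA) + Multiset.card (ψ₅.roots.filter pB)
      = 12 := by
    rw [← Multiset.card_add, hadd2, hcard]
  -- product of the absolute values of the roots
  have hsp := Polynomial.Splits.eq_prod_roots (IsAlgClosed.splits ψ₅)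
  rw [hlead] at hsp
  have e1 : ψ₅.eval 0 = 5 * (ψ₅.roots.map (fun r => -r)).prod := by
    conv_lhs => rw [hsp]
    simp [eval_multiset_prod, Multiset.map_map]
  have e2 : v (ψ₅.eval 0) = 1 := by
    have h0 : ψ₅.eval 0 = t^6 - 32*t^3 - 256 := by rw [hev 0]; ring
    rw [h0, hc0]
  have e3 : (ψ₅.roots.map (fun r => v r)).prod = 5 := by
    have e4 : v (ψ₅.eval 0) = 1/5 * ((ψ₅.roots.map (fun r => -r)).map v).prod := by
      rw [e1, map_mul, hv5K, map_multiset_prod]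
    have e5 : ((ψ₅.roots.map (fun r => -r)).map v).prod
        = (ψ₅.roots.map (fun r => v r)).prod := by
      rw [Multiset.map_map]
      exact congrArg _ (Multiset.map_congr rfl fun r _ => v.map_neg r)
    rw [e2, e5] at e4
    linarith
  have hsplitprod : ((ψ₅.roots.filter pA).map (fun r => v r)).prod
      * ((ψ₅.roots.filter pB).map (fun r => v r)).prod = 5 := by
    rw [← Multiset.prod_add, ← Multiset.map_add, hadd2, e3]
  have hA10 : ((ψ₅.roots.filter pA).map (fun r => v r)).prod ^ 10
      = ((v t)⁻¹) ^ Multiset.card (ψ₅.roots.filter pA) := by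
    rw [← Multiset.prod_map_pow]
    rw [Multiset.map_congr rfl (fun r hr => ?_), Multiset.map_const',
      Multiset.prod_replicate]
    have h := Multiset.of_mem_filter hr
    rw [hpA] at h
    exact eq_inv_of_mul_eq_one_left h
  have hB10 : ((ψ₅.roots.filter pB).map (fun r => v r)).prod ^ 10
      = ((5 * v t) ^ 5) ^ Multiset.card (ψ₅.roots.filter pB) := by
    rw [← Multiset.prod_map_pow]
    rw [Multiset.map_congr rfl (fun r hr => ?_), Multiset.map_const',
      Multiset.prod_replicate]
    have h := Multiset.of_mem_filter hr
    rw [hpB] at h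
    rw [show (10:ℕ) = 2*5 from rfl, pow_mul, h]
  have hE : ((v t)⁻¹) ^ Multiset.card (ψ₅.roots.filter pA)
      * ((5 * v t) ^ 5) ^ Multiset.card (ψ₅.roots.filter pB) = 5 ^ 10 := by
    rw [← hA10, ← hB10, ← mul_pow, hsplitprod]
  have htne : v t ≠ 0 := ne_of_gt ha0
  have hE' : ((5 * v t) ^ 5) ^ Multiset.card (ψ₅.roots.filter pB)
      = 5 ^ 10 * (v t) ^ Multiset.card (ψ₅.roots.filter pA) := by
    calc ((5 * v t) ^ 5) ^ Multiset.card (ψ₅.roots.filter pB)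
        = ((v t)⁻¹) ^ Multiset.card (ψ₅.roots.filter pA)
          * (v t) ^ Multiset.card (ψ₅.roots.filter pA)
          * ((5 * v t) ^ 5) ^ Multiset.card (ψ₅.roots.filter pB) := by
          rw [← mul_pow, inv_mul_cancel₀ htne, one_pow, one_mul]
    _ = ((v t)⁻¹) ^ Multiset.card (ψ₅.roots.filter pA)
          * ((5 * v t) ^ 5) ^ Multiset.card (ψ₅.roots.filter pB)
          * (v t) ^ Multiset.card (ψ₅.roots.filter pA) := by ring
    _ = 5 ^ 10 * (v t) ^ Multiset.card (ψ₅.roots.filter pA) := by rw [hE]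
  have hqq : ((5 * v t) ^ 5 * v t) ^ Multiset.card (ψ₅.roots.filter pB)
      = ((5 * v t) ^ 5 * v t) ^ 2 := by
    calc ((5 * v t) ^ 5 * v t) ^ Multiset.card (ψ₅.roots.filter pB)
        = ((5 * v t) ^ 5) ^ Multiset.card (ψ₅.roots.filter pB)
          * (v t) ^ Multiset.card (ψ₅.roots.filter pB) := mul_pow _ _ _
    _ = 5 ^ 10 * (v t) ^ Multiset.card (ψ₅.roots.filter pA)
          * (v t) ^ Multiset.card (ψ₅.roots.filter pB) := by rw [hE']
    _ = 5 ^ 10 * ((v t) ^ (Multiset.card (ψ₅.roots.filter pA)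
          + Multiset.card (ψ₅.roots.filter pB))) := by rw [pow_add]; ring
    _ = 5 ^ 10 * (v t) ^ 12 := by rw [hcards]
    _ = ((5 * v t) ^ 5 * v t) ^ 2 := by ring
  have hnB : Multiset.card (ψ₅.roots.filter pB) = 2 :=
    pow_right_injective₀ (show (0:ℝ) < (5 * v t) ^ 5 * v t by positivity)
      (ne_of_gt (dpa_qgt hq5)) hqq
  have hnA : Multiset.card (ψ₅.roots.filter pA) = 10 := by omega
  exact ⟨hcard, hnA, hnB⟩
end

section
/- Let t ∈ K satisfy ‖t‖⁶ ≤ 5⁻⁵ (i.e. v₅(t) ≥ 5/6), and let ψ₅ ∈ K[X] be the 5-division polynomial of the Weierstrass curve E_t : y² = x³ + t·x + 1. Then every root x ∈ K of ψ₅ satisfies ‖x‖¹² = 5. (In particular all nonzero 5-torsion points of E_t have x-coordinates of the same absolute value, so E_t has no canonical subgroup: it is too-supersingular.) -/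
open Polynomial

private lemma maxlt {K : Type*} [Field K] {v : AbsoluteValue K ℝ}
    (hna : IsNonarchimedean v) {a b : K} {B : ℝ} (ha : v a < B) (hb : v b < B) :
    v (a + b) < B :=
  (hna a b).trans_lt (max_lt ha hb)

private lemma domleft {K : Type*} [Field K] {v : AbsoluteValue K ℝ}
    (hna : IsNonarchimedean v) {a b : K} (h : v b < v a) : v (a + b) = v a := by
  have h1 : v (a + b) ≤ v a := (hna a b).trans (max_le le_rfl h.le)
  have h2 : v a ≤ max (v (a + b)) (v b) := by
    simpa [v.map_neg] using hna (a + b) (-b)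
  rcases le_total (v (a + b)) (v b) with hc | hc
  · exact absurd h (not_lt.mpr (h2.trans (max_le hc le_rfl)))
  · exact le_antisymm h1 (h2.trans (max_le le_rfl hc))

private lemma domright {K : Type*} [Field K] {v : AbsoluteValue K ℝ}
    (hna : IsNonarchimedean v) {a b : K} (h : v a < v b) : v (a + b) = v b := by
  rw [add_comm]; exact domleft hna h

private lemma powinv_le {P : ℝ} (hP0 : 0 ≤ P) (hP : P ≤ (5:ℝ)⁻¹ ^ 5) (a : ℕ) :
    P ^ (2 * a) ≤ (5:ℝ)⁻¹ ^ (10 * a) := by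
  calc P ^ (2 * a) ≤ ((5:ℝ)⁻¹ ^ 5) ^ (2 * a) := pow_le_pow_left₀ hP0 hP _
    _ = (5:ℝ)⁻¹ ^ (10 * a) := by rw [← pow_mul]; congr 1; omega

private lemma key1 {P S : ℝ} (hP0 : 0 ≤ P) (hP : P ≤ (5:ℝ)⁻¹ ^ 5) (hS : 5 < S)
    {a b : ℕ} (hb : b ≤ 10 * a) (hb12 : b ≤ 11) :
    P ^ (2 * a) * S ^ b < S ^ 12 * ((5:ℝ)⁻¹) ^ 12 := by
  obtain ⟨c, hc, hc1⟩ : ∃ c, b + c = 12 ∧ 1 ≤ c := ⟨12 - b, by omega, by omega⟩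
  have hS0 : (0:ℝ) < S := by linarith
  have h1 : P ^ (2 * a) ≤ (5:ℝ)⁻¹ ^ b :=
    (powinv_le hP0 hP a).trans (pow_le_pow_of_le_one (by norm_num) (by norm_num) hb)
  have hbc : (5:ℝ) ^ b * 5 ^ c = 5 ^ 12 := by rw [← pow_add, hc]
  have hone : (5:ℝ) ^ b * 5 ^ c * (5:ℝ)⁻¹ ^ 12 = 1 := by rw [hbc]; norm_num
  have h3 : (5:ℝ)⁻¹ ^ b = 5 ^ c * (5:ℝ)⁻¹ ^ 12 := by
    calc (5:ℝ)⁻¹ ^ b = 5⁻¹ ^ b * (5 ^ b * 5 ^ c * (5:ℝ)⁻¹ ^ 12) := by rw [hone, mul_one]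
      _ = (5⁻¹ ^ b * 5 ^ b) * (5 ^ c * (5:ℝ)⁻¹ ^ 12) := by ring
      _ = 5 ^ c * (5:ℝ)⁻¹ ^ 12 := by
          rw [inv_pow, inv_mul_cancel₀ (pow_ne_zero _ (by norm_num)), one_mul]
  calc P ^ (2 * a) * S ^ b ≤ (5:ℝ)⁻¹ ^ b * S ^ b :=
        mul_le_mul_of_nonneg_right h1 (pow_nonneg hS0.le b)
    _ = S ^ b * (5 ^ c * (5:ℝ)⁻¹ ^ 12) := by rw [h3]; ring
    _ < S ^ b * (S ^ c * (5:ℝ)⁻¹ ^ 12) := by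
        refine mul_lt_mul_of_pos_left (mul_lt_mul_of_pos_right ?_ (by norm_num))
          (pow_pos hS0 b)
        exact pow_lt_pow_left₀ hS (by norm_num) (by omega)
    _ = S ^ 12 * (5:ℝ)⁻¹ ^ 12 := by rw [← mul_assoc, ← pow_add, hc]

private lemma key2 {P S : ℝ} (hP0 : 0 ≤ P) (hP : P ≤ (5:ℝ)⁻¹ ^ 5) (hS0 : 0 ≤ S) (hS : S < 5)
    {a b : ℕ} (hb1 : 1 ≤ b) (hb : b ≤ 10 * a) :
    P ^ (2 * a) * S ^ b < 1 := by
  have h4 : (0:ℝ) < (5:ℝ)⁻¹ ^ (10 * a) := by positivity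
  calc P ^ (2 * a) * S ^ b ≤ (5:ℝ)⁻¹ ^ (10 * a) * S ^ b :=
        mul_le_mul_of_nonneg_right (powinv_le hP0 hP a) (pow_nonneg hS0 b)
    _ < (5:ℝ)⁻¹ ^ (10 * a) * 5 ^ b :=
        mul_lt_mul_of_pos_left (pow_lt_pow_left₀ hS hS0 (by omega)) h4
    _ ≤ (5:ℝ)⁻¹ ^ (10 * a) * 5 ^ (10 * a) :=
        mul_le_mul_of_nonneg_left (pow_le_pow_right₀ (by norm_num) hb) h4.le
    _ = 1 := by rw [inv_pow, inv_mul_cancel₀ (by positivity)]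

private lemma pow12eq (u r : ℝ) (a b : ℕ) :
    (u ^ a * r ^ b) ^ 12 = (u ^ 6) ^ (2 * a) * (r ^ 12) ^ b := by
  rw [mul_pow, ← pow_mul, ← pow_mul, ← pow_mul, ← pow_mul]
  congr 1
  · congr 1; omega
  · congr 1; omega

private lemma inst1 {u r : ℝ} (hu0 : 0 ≤ u) (hr0 : 0 ≤ r)
    (ht : u ^ 6 ≤ (5:ℝ)⁻¹ ^ 5) (hS : 5 < r ^ 12)
    {a b : ℕ} (hb : b ≤ 10 * a) (hb12 : b ≤ 11) :
    u ^ a * r ^ b < 5⁻¹ * r ^ 12 := by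
  apply lt_of_pow_lt_pow_left₀ 12 (by positivity)
  rw [pow12eq]
  calc (u ^ 6) ^ (2 * a) * (r ^ 12) ^ b < (r ^ 12) ^ 12 * ((5:ℝ)⁻¹) ^ 12 :=
      key1 (by positivity) ht hS hb hb12
    _ = (5⁻¹ * r ^ 12) ^ 12 := by ring

private lemma inst2 {u r : ℝ} (hu0 : 0 ≤ u) (hr0 : 0 ≤ r)
    (ht : u ^ 6 ≤ (5:ℝ)⁻¹ ^ 5) (hS : r ^ 12 < 5)
    {a b : ℕ} (hb1 : 1 ≤ b) (hb : b ≤ 10 * a) :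
    u ^ a * r ^ b < 1 := by
  apply lt_of_pow_lt_pow_left₀ 12 zero_le_one
  rw [pow12eq, one_pow]
  exact key2 (by positivity) ht (by positivity) hS hb1 hb

private lemma elem_lt {K : Type*} [Field K] {v : AbsoluteValue K ℝ} {c t x : K} {B : ℝ}
    (hc : v c ≤ 1) {a b : ℕ} (h : v t ^ a * v x ^ b < B) :
    v (c * (t ^ a * x ^ b)) < B := by
  rw [map_mul, map_mul, map_pow, map_pow]
  calc v c * (v t ^ a * v x ^ b) ≤ 1 * (v t ^ a * v x ^ b) :=
      mul_le_mul_of_nonneg_right hc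
        (mul_nonneg (pow_nonneg (v.nonneg t) a) (pow_nonneg (v.nonneg x) b))
    _ < B := by rw [one_mul]; exact h

private lemma elem_lt5 {K : Type*} [Field K] {v : AbsoluteValue K ℝ} {c x : K} {B : ℝ}
    (hc : v c ≤ 5⁻¹) {b : ℕ} (h : 5⁻¹ * v x ^ b < B) :
    v (c * x ^ b) < B := by
  rw [map_mul, map_pow]
  calc v c * v x ^ b ≤ 5⁻¹ * v x ^ b :=
      mul_le_mul_of_nonneg_right hc (pow_nonneg (v.nonneg x) b)
    _ < B := h

set_option maxHeartbeats 2000000 in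
open Polynomial in
/-- For `v₅(t) ≥ 5/6` (i.e. `‖t‖⁶ ≤ 5⁻⁵`), every root of the 5-division polynomial
of `E_t : y² = x³ + tx + 1` satisfies `‖x‖¹² = 5`: `E_t` is too-supersingular. -/
theorem div_poly_roots_too_supersingular {K : Type*} [Field K]
    (v : AbsoluteValue K ℝ) (hna : IsNonarchimedean v)
    (hQ : ∀ q : ℚ, v (q : K) = (padicNorm 5 q : ℝ))
    (t : K) (ht : v t ^ 6 ≤ (5 : ℝ)⁻¹ ^ 5) :
    ∀ ψ₅ : K[X],
      ψ₅ = C 5 * X ^ 12 + C (62 * t) * X ^ 10 + C 380 * X ^ 9 + C (-105 * t ^ 2) * X ^ 8 +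
        C (240 * t) * X ^ 7 + C (-300 * t ^ 3 - 240) * X ^ 6 + C (-696 * t ^ 2) * X ^ 5 +
        C (-125 * t ^ 4 - 1920 * t) * X ^ 4 + C (-80 * t ^ 3 - 1600) * X ^ 3 +
        C (-50 * t ^ 5 - 240 * t ^ 2) * X ^ 2 + C (-100 * t ^ 4 - 640 * t) * X +
        C (t ^ 6 - 32 * t ^ 3 - 256) →
      ∀ x : K, ψ₅.eval x = 0 → v x ^ 12 = 5 := by
  intro ψ hψ x hx
  subst hψ
  simp only [eval_add, eval_mul, eval_pow, eval_C, eval_X] at hx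
  haveI : Fact (Nat.Prime 5) := ⟨by norm_num⟩
  have hu0 : 0 ≤ v t := v.nonneg t
  have hr0 : 0 ≤ v x := v.nonneg x
  -- values of rational constants
  have hnat : ∀ n : ℕ, v (n : K) ≤ 1 := by
    intro n
    have h := hQ (n : ℚ)
    rw [Rat.cast_natCast] at h
    rw [h]
    have h2 : padicNorm 5 ((n : ℤ) : ℚ) ≤ 1 := padicNorm.of_int (n : ℤ)
    rw [Int.cast_natCast] at h2
    exact_mod_cast h2
  have h5 : v (5 : K) = 5⁻¹ := by
    have h := hQ 5
    rw [show ((5 : ℚ) : K) = (5 : K) by norm_cast] at h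
    rw [h, show (5 : ℚ) = ((5 : ℕ) : ℚ) by norm_cast, padicNorm.padicNorm_p (by norm_num)]
    norm_num
  have h256 : v (256 : K) = 1 := by
    have h := hQ 256
    rw [show ((256 : ℚ) : K) = (256 : K) by norm_cast] at h
    rw [h, show (256 : ℚ) = (((256 : ℤ)) : ℚ) by norm_cast,
      (padicNorm.int_eq_one_iff 256).mpr (by decide)]
    norm_num
  have h62 : v (62 : K) ≤ 1 := by simpa using hnat 62
  have h105 : v (105 : K) ≤ 1 := by simpa using hnat 105
  have h240 : v (240 : K) ≤ 1 := by simpa using hnat 240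
  have h300 : v (300 : K) ≤ 1 := by simpa using hnat 300
  have h696 : v (696 : K) ≤ 1 := by simpa using hnat 696
  have h125 : v (125 : K) ≤ 1 := by simpa using hnat 125
  have h1920 : v (1920 : K) ≤ 1 := by simpa using hnat 1920
  have h80 : v (80 : K) ≤ 1 := by simpa using hnat 80
  have h50 : v (50 : K) ≤ 1 := by simpa using hnat 50
  have h100 : v (100 : K) ≤ 1 := by simpa using hnat 100
  have h640 : v (640 : K) ≤ 1 := by simpa using hnat 640
  have h32 : v (32 : K) ≤ 1 := by simpa using hnat 32
  have h76 : v (76 : K) ≤ 1 := by simpa using hnat 76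
  have h48 : v (48 : K) ≤ 1 := by simpa using hnat 48
  have h320 : v (320 : K) ≤ 1 := by simpa using hnat 320
  have hdiv5 : ∀ m : K, v m ≤ 1 → v (5 * m) ≤ 5⁻¹ := by
    intro m hm
    rw [map_mul, h5]
    nlinarith [v.nonneg m]
  have h380 : v (380 : K) ≤ 5⁻¹ := by
    rw [show (380 : K) = 5 * 76 by norm_num]; exact hdiv5 _ h76
  have h240' : v (240 : K) ≤ 5⁻¹ := by
    rw [show (240 : K) = 5 * 48 by norm_num]; exact hdiv5 _ h48
  have h1600 : v (1600 : K) ≤ 5⁻¹ := by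
    rw [show (1600 : K) = 5 * 320 by norm_num]; exact hdiv5 _ h320
  have hv12 : v (5 * x ^ 12) = 5⁻¹ * v x ^ 12 := by rw [map_mul, map_pow, h5]
  have hu3lt1 : v t ^ 3 < 1 := by nlinarith [pow_nonneg hu0 3]
  have ht6lt1 : v (t ^ 6) < 1 := by
    rw [map_pow]
    have : (5 : ℝ)⁻¹ ^ 5 < 1 := by norm_num
    linarith
  have h32t3lt1 : v (-(32 * t ^ 3)) < 1 := by
    rw [v.map_neg, map_mul, map_pow]
    calc v 32 * v t ^ 3 ≤ 1 * v t ^ 3 := mul_le_mul_of_nonneg_right h32 (pow_nonneg hu0 3)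
      _ < 1 := by rw [one_mul]; exact hu3lt1
  rcases lt_trichotomy (v x ^ 12) 5 with hS | hS | hS
  · -- r^12 < 5 : constant term dominates, contradiction
    have hpure2 : ∀ b : ℕ, b ≤ 12 → v x ^ b < 5 := by
      intro b hb
      rcases le_or_gt (v x) 1 with h | h
      · have := pow_le_one₀ hr0 h (n := b); linarith
      · have h1 : v x ^ b ≤ v x ^ 12 := pow_le_pow_right₀ h.le hb
        linarith
    have hT12 : v (5 * x ^ 12) < 1 := by rw [hv12]; linarith
    have hT10 : v (62 * t * x ^ 10) < 1 := by
      rw [show (62 * t * x ^ 10 : K) = 62 * (t ^ 1 * x ^ 10) by ring]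
      exact elem_lt h62 (inst2 hu0 hr0 ht hS (by norm_num) (by norm_num))
    have hT9 : v (380 * x ^ 9) < 1 := by
      refine elem_lt5 h380 ?_
      have := hpure2 9 (by norm_num); linarith
    have hT8 : v (-105 * t ^ 2 * x ^ 8) < 1 := by
      rw [show (-105 * t ^ 2 * x ^ 8 : K) = -(105 * (t ^ 2 * x ^ 8)) by ring, v.map_neg]
      exact elem_lt h105 (inst2 hu0 hr0 ht hS (by norm_num) (by norm_num))
    have hT7 : v (240 * t * x ^ 7) < 1 := by
      rw [show (240 * t * x ^ 7 : K) = 240 * (t ^ 1 * x ^ 7) by ring]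
      exact elem_lt h240 (inst2 hu0 hr0 ht hS (by norm_num) (by norm_num))
    have hT6 : v ((-300 * t ^ 3 - 240) * x ^ 6) < 1 := by
      rw [show ((-300 * t ^ 3 - 240) * x ^ 6 : K)
          = -(300 * (t ^ 3 * x ^ 6)) + -(240 * x ^ 6) by ring]
      refine maxlt hna ?_ ?_
      · rw [v.map_neg]
        exact elem_lt h300 (inst2 hu0 hr0 ht hS (by norm_num) (by norm_num))
      · rw [v.map_neg]
        refine elem_lt5 h240' ?_
        have := hpure2 6 (by norm_num); linarith
    have hT5 : v (-696 * t ^ 2 * x ^ 5) < 1 := by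
      rw [show (-696 * t ^ 2 * x ^ 5 : K) = -(696 * (t ^ 2 * x ^ 5)) by ring, v.map_neg]
      exact elem_lt h696 (inst2 hu0 hr0 ht hS (by norm_num) (by norm_num))
    have hT4 : v ((-125 * t ^ 4 - 1920 * t) * x ^ 4) < 1 := by
      rw [show ((-125 * t ^ 4 - 1920 * t) * x ^ 4 : K)
          = -(125 * (t ^ 4 * x ^ 4)) + -(1920 * (t ^ 1 * x ^ 4)) by ring]
      refine maxlt hna ?_ ?_
      · rw [v.map_neg]
        exact elem_lt h125 (inst2 hu0 hr0 ht hS (by norm_num) (by norm_num))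
      · rw [v.map_neg]
        exact elem_lt h1920 (inst2 hu0 hr0 ht hS (by norm_num) (by norm_num))
    have hT3 : v ((-80 * t ^ 3 - 1600) * x ^ 3) < 1 := by
      rw [show ((-80 * t ^ 3 - 1600) * x ^ 3 : K)
          = -(80 * (t ^ 3 * x ^ 3)) + -(1600 * x ^ 3) by ring]
      refine maxlt hna ?_ ?_
      · rw [v.map_neg]
        exact elem_lt h80 (inst2 hu0 hr0 ht hS (by norm_num) (by norm_num))
      · rw [v.map_neg]
        refine elem_lt5 h1600 ?_
        have := hpure2 3 (by norm_num); linarith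
    have hT2 : v ((-50 * t ^ 5 - 240 * t ^ 2) * x ^ 2) < 1 := by
      rw [show ((-50 * t ^ 5 - 240 * t ^ 2) * x ^ 2 : K)
          = -(50 * (t ^ 5 * x ^ 2)) + -(240 * (t ^ 2 * x ^ 2)) by ring]
      refine maxlt hna ?_ ?_
      · rw [v.map_neg]
        exact elem_lt h50 (inst2 hu0 hr0 ht hS (by norm_num) (by norm_num))
      · rw [v.map_neg]
        exact elem_lt h240 (inst2 hu0 hr0 ht hS (by norm_num) (by norm_num))
    have hT1 : v ((-100 * t ^ 4 - 640 * t) * x) < 1 := by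
      rw [show ((-100 * t ^ 4 - 640 * t) * x : K)
          = -(100 * (t ^ 4 * x ^ 1)) + -(640 * (t ^ 1 * x ^ 1)) by ring]
      refine maxlt hna ?_ ?_
      · rw [v.map_neg]
        exact elem_lt h100 (inst2 hu0 hr0 ht hS (by norm_num) (by norm_num))
      · rw [v.map_neg]
        exact elem_lt h640 (inst2 hu0 hr0 ht hS (by norm_num) (by norm_num))
    have hBIG : v (5 * x ^ 12 + 62 * t * x ^ 10 + 380 * x ^ 9 + -105 * t ^ 2 * x ^ 8 +
        240 * t * x ^ 7 + (-300 * t ^ 3 - 240) * x ^ 6 + -696 * t ^ 2 * x ^ 5 +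
        (-125 * t ^ 4 - 1920 * t) * x ^ 4 + (-80 * t ^ 3 - 1600) * x ^ 3 +
        (-50 * t ^ 5 - 240 * t ^ 2) * x ^ 2 + (-100 * t ^ 4 - 640 * t) * x) < 1 :=
      maxlt hna (maxlt hna (maxlt hna (maxlt hna (maxlt hna (maxlt hna (maxlt hna
        (maxlt hna (maxlt hna (maxlt hna hT12 hT10) hT9) hT8) hT7) hT6) hT5) hT4)
        hT3) hT2) hT1
    have hsmall : v (t ^ 6 + -(32 * t ^ 3)) < 1 := maxlt hna ht6lt1 h32t3lt1
    have ha0 : v (t ^ 6 - 32 * t ^ 3 - 256) = 1 := by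
      rw [show (t ^ 6 - 32 * t ^ 3 - 256 : K)
          = t ^ 6 + -(32 * t ^ 3) + -(256 : K) by ring,
        domright hna (by rw [v.map_neg, h256]; exact hsmall), v.map_neg, h256]
    have hfin := domright hna (a := 5 * x ^ 12 + 62 * t * x ^ 10 + 380 * x ^ 9 +
        -105 * t ^ 2 * x ^ 8 + 240 * t * x ^ 7 + (-300 * t ^ 3 - 240) * x ^ 6 +
        -696 * t ^ 2 * x ^ 5 + (-125 * t ^ 4 - 1920 * t) * x ^ 4 +
        (-80 * t ^ 3 - 1600) * x ^ 3 + (-50 * t ^ 5 - 240 * t ^ 2) * x ^ 2 +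
        (-100 * t ^ 4 - 640 * t) * x) (b := t ^ 6 - 32 * t ^ 3 - 256)
        (by rw [ha0]; exact hBIG)
    rw [hx, map_zero, ha0] at hfin
    norm_num at hfin
  · exact hS
  · -- r^12 > 5 : leading term dominates, contradiction
    have hB1 : (1 : ℝ) < 5⁻¹ * v x ^ 12 := by linarith
    have hr1 : (1 : ℝ) < v x := by
      apply lt_of_pow_lt_pow_left₀ 12 hr0
      rw [one_pow]; linarith
    have hT10 : v (62 * t * x ^ 10) < 5⁻¹ * v x ^ 12 := by
      rw [show (62 * t * x ^ 10 : K) = 62 * (t ^ 1 * x ^ 10) by ring]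
      exact elem_lt h62 (inst1 hu0 hr0 ht hS (by norm_num) (by norm_num))
    have hT9 : v (380 * x ^ 9) < 5⁻¹ * v x ^ 12 := by
      refine elem_lt5 h380 ?_
      have h9 : v x ^ 9 < v x ^ 12 := pow_lt_pow_right₀ hr1 (by norm_num)
      nlinarith
    have hT8 : v (-105 * t ^ 2 * x ^ 8) < 5⁻¹ * v x ^ 12 := by
      rw [show (-105 * t ^ 2 * x ^ 8 : K) = -(105 * (t ^ 2 * x ^ 8)) by ring, v.map_neg]
      exact elem_lt h105 (inst1 hu0 hr0 ht hS (by norm_num) (by norm_num))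
    have hT7 : v (240 * t * x ^ 7) < 5⁻¹ * v x ^ 12 := by
      rw [show (240 * t * x ^ 7 : K) = 240 * (t ^ 1 * x ^ 7) by ring]
      exact elem_lt h240 (inst1 hu0 hr0 ht hS (by norm_num) (by norm_num))
    have hT6 : v ((-300 * t ^ 3 - 240) * x ^ 6) < 5⁻¹ * v x ^ 12 := by
      rw [show ((-300 * t ^ 3 - 240) * x ^ 6 : K)
          = -(300 * (t ^ 3 * x ^ 6)) + -(240 * x ^ 6) by ring]
      refine maxlt hna ?_ ?_
      · rw [v.map_neg]
        exact elem_lt h300 (inst1 hu0 hr0 ht hS (by norm_num) (by norm_num))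
      · rw [v.map_neg]
        refine elem_lt5 h240' ?_
        have h6 : v x ^ 6 < v x ^ 12 := pow_lt_pow_right₀ hr1 (by norm_num)
        nlinarith
    have hT5 : v (-696 * t ^ 2 * x ^ 5) < 5⁻¹ * v x ^ 12 := by
      rw [show (-696 * t ^ 2 * x ^ 5 : K) = -(696 * (t ^ 2 * x ^ 5)) by ring, v.map_neg]
      exact elem_lt h696 (inst1 hu0 hr0 ht hS (by norm_num) (by norm_num))
    have hT4 : v ((-125 * t ^ 4 - 1920 * t) * x ^ 4) < 5⁻¹ * v x ^ 12 := by
      rw [show ((-125 * t ^ 4 - 1920 * t) * x ^ 4 : K)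
          = -(125 * (t ^ 4 * x ^ 4)) + -(1920 * (t ^ 1 * x ^ 4)) by ring]
      refine maxlt hna ?_ ?_
      · rw [v.map_neg]
        exact elem_lt h125 (inst1 hu0 hr0 ht hS (by norm_num) (by norm_num))
      · rw [v.map_neg]
        exact elem_lt h1920 (inst1 hu0 hr0 ht hS (by norm_num) (by norm_num))
    have hT3 : v ((-80 * t ^ 3 - 1600) * x ^ 3) < 5⁻¹ * v x ^ 12 := by
      rw [show ((-80 * t ^ 3 - 1600) * x ^ 3 : K)
          = -(80 * (t ^ 3 * x ^ 3)) + -(1600 * x ^ 3) by ring]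
      refine maxlt hna ?_ ?_
      · rw [v.map_neg]
        exact elem_lt h80 (inst1 hu0 hr0 ht hS (by norm_num) (by norm_num))
      · rw [v.map_neg]
        refine elem_lt5 h1600 ?_
        have h3 : v x ^ 3 < v x ^ 12 := pow_lt_pow_right₀ hr1 (by norm_num)
        nlinarith
    have hT2 : v ((-50 * t ^ 5 - 240 * t ^ 2) * x ^ 2) < 5⁻¹ * v x ^ 12 := by
      rw [show ((-50 * t ^ 5 - 240 * t ^ 2) * x ^ 2 : K)
          = -(50 * (t ^ 5 * x ^ 2)) + -(240 * (t ^ 2 * x ^ 2)) by ring]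
      refine maxlt hna ?_ ?_
      · rw [v.map_neg]
        exact elem_lt h50 (inst1 hu0 hr0 ht hS (by norm_num) (by norm_num))
      · rw [v.map_neg]
        exact elem_lt h240 (inst1 hu0 hr0 ht hS (by norm_num) (by norm_num))
    have hT1 : v ((-100 * t ^ 4 - 640 * t) * x) < 5⁻¹ * v x ^ 12 := by
      rw [show ((-100 * t ^ 4 - 640 * t) * x : K)
          = -(100 * (t ^ 4 * x ^ 1)) + -(640 * (t ^ 1 * x ^ 1)) by ring]
      refine maxlt hna ?_ ?_
      · rw [v.map_neg]
        exact elem_lt h100 (inst1 hu0 hr0 ht hS (by norm_num) (by norm_num))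
      · rw [v.map_neg]
        exact elem_lt h640 (inst1 hu0 hr0 ht hS (by norm_num) (by norm_num))
    have hT0 : v (t ^ 6 - 32 * t ^ 3 - 256) < 5⁻¹ * v x ^ 12 := by
      rw [show (t ^ 6 - 32 * t ^ 3 - 256 : K)
          = t ^ 6 + -(32 * t ^ 3) + -(256 : K) by ring]
      refine maxlt hna (maxlt hna ?_ ?_) ?_
      · exact ht6lt1.trans hB1
      · exact h32t3lt1.trans hB1
      · rw [v.map_neg, h256]; exact hB1
    have step : ∀ s T : K, v s = 5⁻¹ * v x ^ 12 → v T < 5⁻¹ * v x ^ 12 →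
        v (s + T) = 5⁻¹ * v x ^ 12 := by
      intro s T hs hT
      rw [domleft hna (by rw [hs]; exact hT)]
      exact hs
    have hfin := step _ _ (step _ _ (step _ _ (step _ _ (step _ _ (step _ _ (step _ _
      (step _ _ (step _ _ (step _ _ (step _ _ hv12 hT10) hT9) hT8) hT7) hT6) hT5)
      hT4) hT3) hT2) hT1) hT0
    rw [hx, map_zero] at hfin
    linarith
end

section
/- Let u ∈ K satisfy ‖u‖² = 5⁻¹ and ‖u² − 5‖ = 5⁻¹ (i.e. v₅(u) = 1/2 and v₅(u² − 5) = 1). Then t := u⁵ + 5u⁴ + 15u³ + 25u² + 25u satisfies ‖t‖² = 5⁻⁵ (i.e. v₅(t) = 5/2). (This shows that the affinoid v₅(u² − 5) = 1 of X₀(25) is carried by π₅ onto the circle v₅(t) = 5/2 of X₀(5).) -/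
private lemma abv_add_eq_left {K : Type*} [Field K] (v : AbsoluteValue K ℝ)
    (hna : IsNonarchimedean v) {x y : K} (h : v y < v x) : v (x + y) = v x := by
  refine le_antisymm ((hna x y).trans (max_le le_rfl h.le)) ?_
  by_contra hlt
  push_neg at hlt
  have h2 : v x ≤ max (v (x + y)) (v (-y)) := by
    have := hna (x + y) (-y); simpa using this
  rw [v.map_neg] at h2
  have : v x < v x := lt_of_le_of_lt h2 (max_lt hlt h)
  exact lt_irrefl _ this

/-- If `v₅(u) = 1/2` and `v₅(u² − 5) = 1` (i.e. `‖u‖² = 5⁻¹` and `‖u² − 5‖ = 5⁻¹`),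
then `t = u(u⁴ + 5u³ + 15u² + 25u + 25)` satisfies `v₅(t) = 5/2` (`‖t‖² = 5⁻⁵`). -/
theorem pi5_image_of_E1_affinoid {K : Type*} [Field K]
    (v : AbsoluteValue K ℝ) (hna : IsNonarchimedean v)
    (hQ : ∀ q : ℚ, v (q : K) = (padicNorm 5 q : ℝ))
    (u : K) (hu : v u ^ 2 = (5 : ℝ)⁻¹) (hu5 : v (u ^ 2 - 5) = (5 : ℝ)⁻¹) :
    v (u ^ 5 + 5 * u ^ 4 + 15 * u ^ 3 + 25 * u ^ 2 + 25 * u) ^ 2 = (5 : ℝ)⁻¹ ^ 5 := by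
  -- basic values of rational constants
  haveI : Fact (Nat.Prime 5) := ⟨by norm_num⟩
  have hp5 : padicNorm 5 (5 : ℚ) = 5⁻¹ := by
    have := padicNorm.padicNorm_p (p := 5) (by norm_num)
    exact_mod_cast this
  have hp3 : padicNorm 5 (3 : ℚ) = 1 := by
    have := (padicNorm.nat_eq_one_iff (p := 5) 3).mpr (by norm_num)
    exact_mod_cast this
  have h5 : v (5 : K) = (5 : ℝ)⁻¹ := by
    have := hQ 5
    rw [hp5] at this
    simpa using this
  have h3 : v (3 : K) = 1 := by
    have := hQ 3
    rw [hp3] at this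
    simpa using this
  have h15 : v (15 : K) = (5 : ℝ)⁻¹ := by
    have : (15 : K) = 5 * 3 := by norm_num
    rw [this, v.map_mul, h5, h3, mul_one]
  have h25 : v (25 : K) = (5 : ℝ)⁻¹ ^ 2 := by
    have : (25 : K) = 5 * 5 := by norm_num
    rw [this, v.map_mul, h5]; ring
  have h125 : v (125 : K) = (5 : ℝ)⁻¹ ^ 3 := by
    have : (125 : K) = 5 * 25 := by norm_num
    rw [this, v.map_mul, h5, h25]; ring
  set w : K := u ^ 2 - 5 with hw
  -- v u > 0, and bounds
  have hu0 : 0 ≤ v u := v.nonneg u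
  have hupos : 0 < v u := by
    rcases hu0.lt_or_eq with h | h
    · exact h
    · exfalso; rw [← h] at hu; norm_num at hu
  -- main term: u * (w^2 + 25*w + 125)
  have hw2 : v (w ^ 2) = (5 : ℝ)⁻¹ ^ 2 := by rw [v.map_pow, hu5]
  have h25w : v (25 * w) = (5 : ℝ)⁻¹ ^ 3 := by
    rw [v.map_mul, h25, hu5]; ring
  have hsmall : v (25 * w + 125) ≤ (5 : ℝ)⁻¹ ^ 3 := by
    have := hna (25 * w) 125
    rw [h25w, h125] at this
    simpa using this
  have hmain : v (w ^ 2 + (25 * w + 125)) = (5 : ℝ)⁻¹ ^ 2 := by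
    rw [abv_add_eq_left v hna, hw2]
    rw [hw2]
    exact lt_of_le_of_lt hsmall (by norm_num)
  -- v of the dominant part u*(w²+25w+125)
  have hdom : v (u * (w ^ 2 + (25 * w + 125))) = v u * (5 : ℝ)⁻¹ ^ 2 := by
    rw [v.map_mul, hmain]
  -- the rest: 5u⁴+25u²
  have hu4 : v (5 * u ^ 4) = (5 : ℝ)⁻¹ ^ 3 := by
    rw [v.map_mul, h5, v.map_pow, show v u ^ 4 = (v u ^ 2) ^ 2 by ring, hu]; ring
  have hu2 : v (25 * u ^ 2) = (5 : ℝ)⁻¹ ^ 3 := by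
    rw [v.map_mul, h25, v.map_pow, hu]; ring
  have hrest : v (5 * u ^ 4 + 25 * u ^ 2) ≤ (5 : ℝ)⁻¹ ^ 3 := by
    have := hna (5 * u ^ 4) (25 * u ^ 2)
    rw [hu4, hu2] at this; simpa using this
  -- strict comparison: (5⁻¹)³ < v u * (5⁻¹)²
  have hvu_gt : (5 : ℝ)⁻¹ < v u := by
    nlinarith [hu, hupos]
  have hstrict : (5 : ℝ)⁻¹ ^ 3 < v u * (5 : ℝ)⁻¹ ^ 2 := by
    nlinarith [hvu_gt]
  -- assemble
  have hdecomp : u ^ 5 + 5 * u ^ 4 + 15 * u ^ 3 + 25 * u ^ 2 + 25 * u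
      = u * (w ^ 2 + (25 * w + 125)) + (5 * u ^ 4 + 25 * u ^ 2) := by
    rw [hw]; ring
  rw [hdecomp, abv_add_eq_left v hna (by rw [hdom]; exact lt_of_le_of_lt hrest hstrict),
    hdom]
  rw [mul_pow, show ((5:ℝ)⁻¹ ^ 2) ^ 2 = (5:ℝ)⁻¹ ^ 4 by ring, hu]
  ring
end

section
/- Let t ∈ K with ‖t‖² = 5⁻¹ (i.e. v₅(t) = 1/2). Then ‖(t² + 10t + 5)³‖² ≤ 5⁻⁵ · ‖t‖²; equivalently, the value j = (t² + 10t + 5)³/t satisfies ‖j‖² ≤ 5⁻⁵; that is, v₅(j) ≥ 5/2, so j lies in the too-supersingular disk of X(1). -/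
lemma padic5_five : (padicNorm 5 5 : ℚ) = 5⁻¹ := by
  haveI : Fact (Nat.Prime 5) := ⟨by norm_num⟩
  simpa using padicNorm.padicNorm_p (p := 5) (by norm_num)

lemma padic5_ten : (padicNorm 5 10 : ℚ) = 5⁻¹ := by
  haveI : Fact (Nat.Prime 5) := ⟨by norm_num⟩
  have h : (10 : ℚ) = 5 * 2 := by norm_num
  have h2 : padicNorm 5 (2 : ℚ) = 1 := by
    have := (padicNorm.nat_eq_one_iff (p := 5) 2).mpr (by norm_num)
    simpa using this
  rw [h, padicNorm.mul 5 2, padic5_five, h2, mul_one]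

/-- If `v₅(t) = 1/2` (i.e. `‖t‖² = 5⁻¹`), then `‖(t² + 10t + 5)³‖² ≤ 5⁻⁵·‖t‖²`;
equivalently `j = (t² + 10t + 5)³/t` satisfies `‖j‖² ≤ 5⁻⁵`, i.e. `v₅(j) ≥ 5/2`,
so `j` lies in the too-supersingular disk of `X(1)`. -/
theorem image_in_too_supersingular_disk {K : Type*} [Field K]
    (v : AbsoluteValue K ℝ) (hna : IsNonarchimedean v)
    (hQ : ∀ q : ℚ, v (q : K) = (padicNorm 5 q : ℝ))
    (t : K) (ht : v t ^ 2 = (5 : ℝ)⁻¹) :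
    v ((t ^ 2 + 10 * t + 5) ^ 3) ^ 2 ≤ (5 : ℝ)⁻¹ ^ 5 * v t ^ 2 ∧
      v ((t ^ 2 + 10 * t + 5) ^ 3 / t) ^ 2 ≤ (5 : ℝ)⁻¹ ^ 5 := by
  have hv5 : v (5 : K) = (5 : ℝ)⁻¹ := by
    have := hQ 5
    rw [padic5_five] at this
    simpa using this
  have hv10 : v (10 : K) = (5 : ℝ)⁻¹ := by
    have := hQ 10
    rw [padic5_ten] at this
    simpa using this
  have hvt_nonneg : (0 : ℝ) ≤ v t := v.nonneg t
  have hvt_le_one : v t ≤ 1 := by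
    nlinarith [ht]
  -- v (t^2) = 1/5
  have hvt2 : v (t ^ 2) = (5 : ℝ)⁻¹ := by
    rw [map_pow]; exact ht
  -- v (10 * t) ≤ 1/5
  have hv10t : v (10 * t) ≤ (5 : ℝ)⁻¹ := by
    rw [map_mul, hv10]
    nlinarith
  -- inner bound
  have hsum : v (t ^ 2 + 10 * t + 5) ≤ (5 : ℝ)⁻¹ := by
    have h1 := hna (t ^ 2) (10 * t)
    have h2 := hna (t ^ 2 + 10 * t) (5 : K)
    rw [hvt2] at h1
    rw [hv5] at h2
    calc v (t ^ 2 + 10 * t + 5) ≤ max (v (t ^ 2 + 10 * t)) (5 : ℝ)⁻¹ := h2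
      _ ≤ (5 : ℝ)⁻¹ := by
          apply max_le _ le_rfl
          exact le_trans h1 (max_le le_rfl hv10t)
  have hcube : v ((t ^ 2 + 10 * t + 5) ^ 3) ^ 2 ≤ (5 : ℝ)⁻¹ ^ 6 := by
    rw [map_pow]
    have hnn := v.nonneg (t ^ 2 + 10 * t + 5)
    calc (v (t ^ 2 + 10 * t + 5) ^ 3) ^ 2 = v (t ^ 2 + 10 * t + 5) ^ 6 := by ring
      _ ≤ (5 : ℝ)⁻¹ ^ 6 := by
          apply pow_le_pow_left₀ hnn hsum
  constructor
  · calc v ((t ^ 2 + 10 * t + 5) ^ 3) ^ 2 ≤ (5 : ℝ)⁻¹ ^ 6 := hcube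
      _ = (5 : ℝ)⁻¹ ^ 5 * v t ^ 2 := by rw [ht]; ring
  · have hvt_ne : v t ≠ 0 := by
      intro h; rw [h] at ht; norm_num at ht
    rw [map_div₀, div_pow]
    rw [div_le_iff₀ (by positivity)]
    calc v ((t ^ 2 + 10 * t + 5) ^ 3) ^ 2 ≤ (5 : ℝ)⁻¹ ^ 6 := hcube
      _ = (5 : ℝ)⁻¹ ^ 5 * v t ^ 2 := by rw [ht]; ring
end
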